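/- arXiv:1410.8174 — 6 statements merged into one kernel-verified Lean document; each statement's English description precedes it below -/
import Mathlib

section
/- Let H be a complex Hilbert space and A : ℝ → B(H) strongly continuous. Then for any t₀ ∈ ℝ and V₀ ∈ B(H), the initial value problem V'(t) = A(t)V(t), V(t₀) = V₀, has a unique strong solution V : ℝ → B(H), meaning: for every ψ ∈ H the map t ↦ V(t)ψ is differentiable with derivative A(t)V(t)ψ, and V(t₀)ψ = V₀ψ. -/
set_option maxHeartbeats 1000000
set_option synthInstance.maxHeartbeats 200000
open Set MeasureTheory intervalIntegral Filter Topology Function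
open scoped Interval

set_option linter.unusedSectionVars false

section aux
variable {H : Type*} [NormedAddCommGroup H] [NormedSpace ℂ H] [CompleteSpace H]

lemma aux_bound (A : ℝ → H →L[ℂ] H) (hA : ∀ ψ : H, Continuous fun t => A t ψ) (a b : ℝ) :
    ∃ L : ℝ, 0 ≤ L ∧ ∀ s ∈ Icc a b, ‖A s‖ ≤ L := by
  obtain ⟨C, hC⟩ := banach_steinhaus (g := fun s : Icc a b => A (s : ℝ)) (fun ψ => by
    obtain ⟨C, hC⟩ := (isCompact_Icc (a := a) (b := b)).exists_bound_of_continuousOn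
      (((hA ψ).comp continuous_id).continuousOn)
    exact ⟨C, fun i => hC i i.2⟩)
  exact ⟨max C 0, le_max_right _ _, fun s hs => le_trans (hC ⟨s, hs⟩) (le_max_left _ _)⟩

lemma aux_contApply (A : ℝ → H →L[ℂ] H) (hA : ∀ ψ : H, Continuous fun t => A t ψ)
    {f : ℝ → H} (hf : Continuous f) : Continuous fun s => A s (f s) := by
  rw [continuous_iff_continuousAt]
  intro s₀
  obtain ⟨L, hL0, hL⟩ := aux_bound A hA (s₀ - 1) (s₀ + 1)
  rw [ContinuousAt, tendsto_iff_norm_sub_tendsto_zero]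
  have h1 : Tendsto (fun s => L * ‖f s - f s₀‖ + ‖A s (f s₀) - A s₀ (f s₀)‖) (𝓝 s₀) (𝓝 0) := by
    have h2 : Tendsto (fun s => ‖f s - f s₀‖) (𝓝 s₀) (𝓝 0) := by
      simpa using ((hf.tendsto s₀).sub (tendsto_const_nhds (x := f s₀))).norm
    have h3 : Tendsto (fun s => ‖A s (f s₀) - A s₀ (f s₀)‖) (𝓝 s₀) (𝓝 0) := by
      simpa using (((hA (f s₀)).tendsto s₀).sub (tendsto_const_nhds (x := A s₀ (f s₀)))).norm
    simpa using (h2.const_mul L).add h3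
  refine squeeze_zero_norm' ?_ h1
  filter_upwards [Icc_mem_nhds (by linarith : s₀ - 1 < s₀) (by linarith : s₀ < s₀ + 1)] with s hs
  have : A s (f s) - A s₀ (f s₀) = A s (f s - f s₀) + (A s (f s₀) - A s₀ (f s₀)) := by
    rw [map_sub]; abel
  rw [norm_norm, this]
  refine (norm_add_le _ _).trans (add_le_add ?_ le_rfl)
  exact ((A s).le_opNorm _).trans (mul_le_mul_of_nonneg_right (hL s hs) (norm_nonneg _))

lemma abs_pow_integral (t₀ t : ℝ) (k : ℕ) :
    |∫ s in t₀..t, |s - t₀| ^ k| ≤ |t - t₀| ^ (k + 1) / (k + 1) := by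
  rw [intervalIntegral_eq_integral_uIoc]
  calc |(if (t₀:ℝ) ≤ t then (1:ℝ) else -1) • ∫ s in Ι t₀ t, |s - t₀| ^ k|
      = |∫ s in Ι t₀ t, |s - t₀| ^ k| := by split_ifs <;> simp
    _ = |t - t₀| ^ (k + 1) / (k + 1) := by
        rw [integral_pow_abs_sub_uIoc]
        exact abs_of_nonneg (by positivity)
    _ ≤ |t - t₀| ^ (k + 1) / (k + 1) := le_rfl

lemma evalCont (ψ : H) : Continuous fun W : H →L[ℂ] H => W ψ :=
  (ContinuousLinearMap.apply ℂ H ψ).continuous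

end aux

section interval

variable {H : Type*} [NormedAddCommGroup H] [NormedSpace ℂ H] [CompleteSpace H]
variable (A : ℝ → H →L[ℂ] H) (t₀ : ℝ) (V₀ : H →L[ℂ] H) {a b : ℝ}

variable (hA : ∀ ψ : H, Continuous fun t => A t ψ)
  (hab : a ≤ b) (ht₀ : t₀ ∈ Icc a b)
  (L : ℝ) (hL0 : 0 ≤ L) (hL : ∀ s ∈ Icc a b, ‖A s‖ ≤ L)

include hA in
lemma extCont (V : C(Icc a b, H →L[ℂ] H)) (ψ : H) :
    Continuous fun s => A s (IccExtend hab V s ψ) :=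
  aux_contApply A hA ((evalCont ψ).comp (V.continuous.comp (continuous_projIcc)))

include hA in
lemma extIntble (V : C(Icc a b, H →L[ℂ] H)) (ψ : H) (u v : ℝ) :
    IntervalIntegrable (fun s => A s (IccExtend hab V s ψ)) volume u v :=
  (extCont A hA hab V ψ).intervalIntegrable u v

include ht₀ in
lemma uIoc_sub (t : Icc a b) {s : ℝ} (hs : s ∈ Ι t₀ (t : ℝ)) : s ∈ Icc a b :=
  uIcc_subset_Icc ht₀ t.2 (Ioc_subset_Icc_self hs)

include hA ht₀ hL0 hL in
/-- The integral operator `ψ ↦ ∫_{t₀}^t A(s) (V(s) ψ) ds` as a bounded operator. -/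
noncomputable def opInt (V : C(Icc a b, H →L[ℂ] H)) (t : Icc a b) : H →L[ℂ] H :=
  LinearMap.mkContinuous
    { toFun := fun ψ => ∫ s in t₀..(t : ℝ), A s (IccExtend hab V s ψ)
      map_add' := fun ψ φ => by
        simp only [map_add]
        exact integral_add (extIntble A hA hab V ψ _ _) (extIntble A hA hab V φ _ _)
      map_smul' := fun c ψ => by
        simp only [_root_.map_smul, RingHom.id_apply]
        rw [intervalIntegral.integral_smul] }
    (L * ‖V‖ * (b - a))
    (fun ψ => by
      have hle : ∀ s ∈ Ι t₀ (t : ℝ), ‖A s (IccExtend hab V s ψ)‖ ≤ L * ‖V‖ * ‖ψ‖ := by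
        intro s hs
        have hs' : s ∈ Icc a b := uIoc_sub t₀ ht₀ t hs
        calc ‖A s (IccExtend hab V s ψ)‖ ≤ ‖A s‖ * ‖IccExtend hab V s ψ‖ := (A s).le_opNorm _
          _ ≤ L * (‖V‖ * ‖ψ‖) := by
              refine mul_le_mul (hL s hs') ?_ (norm_nonneg _) hL0
              exact ((V (projIcc a b hab s)).le_opNorm ψ).trans
                (mul_le_mul_of_nonneg_right (V.norm_coe_le_norm _) (norm_nonneg _))
          _ = L * ‖V‖ * ‖ψ‖ := by ring
      calc ‖∫ s in t₀..(t : ℝ), A s (IccExtend hab V s ψ)‖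
          ≤ L * ‖V‖ * ‖ψ‖ * |(t : ℝ) - t₀| := norm_integral_le_of_norm_le_const hle
        _ ≤ L * ‖V‖ * ‖ψ‖ * (b - a) := by
            have h1 : |(t : ℝ) - t₀| ≤ b - a :=
              abs_sub_le_iff.2 ⟨by linarith [t.2.1, t.2.2, ht₀.1, ht₀.2],
                by linarith [t.2.1, t.2.2, ht₀.1, ht₀.2]⟩
            exact mul_le_mul_of_nonneg_left h1 (by positivity)
        _ = L * ‖V‖ * (b - a) * ‖ψ‖ := by ring)

include hA ht₀ hL0 hL in
lemma opInt_apply (V : C(Icc a b, H →L[ℂ] H)) (t : Icc a b) (ψ : H) :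
    opInt A t₀ hA hab ht₀ L hL0 hL V t ψ = ∫ s in t₀..(t : ℝ), A s (IccExtend hab V s ψ) := rfl

include hA ht₀ hL0 hL in
lemma opInt_norm_sub (V : C(Icc a b, H →L[ℂ] H)) (t t' : Icc a b) :
    ‖opInt A t₀ hA hab ht₀ L hL0 hL V t - opInt A t₀ hA hab ht₀ L hL0 hL V t'‖
      ≤ L * ‖V‖ * |(t : ℝ) - (t' : ℝ)| := by
  refine ContinuousLinearMap.opNorm_le_bound _
    (by positivity) (fun ψ => ?_)
  have heq : (opInt A t₀ hA hab ht₀ L hL0 hL V t - opInt A t₀ hA hab ht₀ L hL0 hL V t') ψ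
      = ∫ s in (t' : ℝ)..(t : ℝ), A s (IccExtend hab V s ψ) := by
    rw [ContinuousLinearMap.sub_apply, opInt_apply, opInt_apply]
    exact integral_interval_sub_left (extIntble A hA hab V ψ _ _) (extIntble A hA hab V ψ _ _)
  rw [heq]
  have hle : ∀ s ∈ Ι (t' : ℝ) (t : ℝ), ‖A s (IccExtend hab V s ψ)‖ ≤ L * ‖V‖ * ‖ψ‖ := by
    intro s hs
    have hs' : s ∈ Icc a b := uIcc_subset_Icc t'.2 t.2 (Ioc_subset_Icc_self hs)
    calc ‖A s (IccExtend hab V s ψ)‖ ≤ ‖A s‖ * ‖IccExtend hab V s ψ‖ := (A s).le_opNorm _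
      _ ≤ L * (‖V‖ * ‖ψ‖) := by
          refine mul_le_mul (hL s hs') ?_ (norm_nonneg _) hL0
          exact ((V (projIcc a b hab s)).le_opNorm ψ).trans
            (mul_le_mul_of_nonneg_right (V.norm_coe_le_norm _) (norm_nonneg _))
      _ = L * ‖V‖ * ‖ψ‖ := by ring
  calc ‖∫ s in (t' : ℝ)..(t : ℝ), A s (IccExtend hab V s ψ)‖
      ≤ L * ‖V‖ * ‖ψ‖ * |(t : ℝ) - (t' : ℝ)| := norm_integral_le_of_norm_le_const hle
    _ = L * ‖V‖ * |(t : ℝ) - (t' : ℝ)| * ‖ψ‖ := by ring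

include hA ht₀ hL0 hL in
/-- The Picard iteration map. -/
noncomputable def picT (V : C(Icc a b, H →L[ℂ] H)) : C(Icc a b, H →L[ℂ] H) :=
  ⟨fun t => V₀ + opInt A t₀ hA hab ht₀ L hL0 hL V t, by
    refine continuous_const.add ?_
    have hlip : LipschitzWith (Real.toNNReal (L * ‖V‖))
        (fun t : Icc a b => opInt A t₀ hA hab ht₀ L hL0 hL V t) := by
      refine LipschitzWith.of_dist_le_mul fun t t' => ?_
      rw [dist_eq_norm, Real.coe_toNNReal _ (by positivity), Subtype.dist_eq, Real.dist_eq]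
      exact opInt_norm_sub A t₀ hA hab ht₀ L hL0 hL V t t'
    exact hlip.continuous⟩

include hA ht₀ hL0 hL in
lemma picT_apply (V : C(Icc a b, H →L[ℂ] H)) (t : Icc a b) :
    picT A t₀ V₀ hA hab ht₀ L hL0 hL V t = V₀ + opInt A t₀ hA hab ht₀ L hL0 hL V t := rfl

end interval

section iter
variable {H : Type*} [NormedAddCommGroup H] [NormedSpace ℂ H] [CompleteSpace H]
variable (A : ℝ → H →L[ℂ] H) (t₀ : ℝ) (V₀ : H →L[ℂ] H) {a b : ℝ}
variable (hA : ∀ ψ : H, Continuous fun t => A t ψ)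
  (hab : a ≤ b) (ht₀ : t₀ ∈ Icc a b)
  (L : ℝ) (hL0 : 0 ≤ L) (hL : ∀ s ∈ Icc a b, ‖A s‖ ≤ L)

include hA ht₀ hL0 hL in
lemma iter_est (k : ℕ) (V W : C(Icc a b, H →L[ℂ] H)) (t : Icc a b) :
    ‖(picT A t₀ V₀ hA hab ht₀ L hL0 hL)^[k] V t - (picT A t₀ V₀ hA hab ht₀ L hL0 hL)^[k] W t‖
      ≤ dist V W * (L ^ k * |(t : ℝ) - t₀| ^ k / k.factorial) := by
  induction k generalizing t with
  | zero =>
      simp only [Function.iterate_zero_apply, pow_zero, Nat.factorial_zero, Nat.cast_one,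
        mul_one, one_mul, div_one]
      rw [← dist_eq_norm]
      exact ContinuousMap.dist_apply_le_dist t
  | succ k ih =>
      rw [Function.iterate_succ_apply', Function.iterate_succ_apply']
      set V' := (picT A t₀ V₀ hA hab ht₀ L hL0 hL)^[k] V with hV'
      set W' := (picT A t₀ V₀ hA hab ht₀ L hL0 hL)^[k] W with hW'
      rw [picT_apply, picT_apply, add_sub_add_left_eq_sub]
      refine ContinuousLinearMap.opNorm_le_bound _
        (mul_nonneg dist_nonneg (by positivity)) (fun ψ => ?_)
      set cst := L ^ (k+1) * dist V W * ‖ψ‖ / k.factorial with hcstdef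
      have hcst0 : (0:ℝ) ≤ cst :=
        div_nonneg (mul_nonneg (mul_nonneg (pow_nonneg hL0 _) dist_nonneg) (norm_nonneg ψ))
          (Nat.cast_nonneg _)
      have heq : (opInt A t₀ hA hab ht₀ L hL0 hL V' t - opInt A t₀ hA hab ht₀ L hL0 hL W' t) ψ
          = ∫ s in t₀..(t : ℝ),
              (A s (IccExtend hab V' s ψ) - A s (IccExtend hab W' s ψ)) := by
        rw [ContinuousLinearMap.sub_apply, opInt_apply, opInt_apply,
          integral_sub (extIntble A hA hab V' ψ _ _) (extIntble A hA hab W' ψ _ _)]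
      rw [heq]
      have hpt : ∀ s ∈ Ι t₀ (t : ℝ),
          ‖A s (IccExtend hab V' s ψ) - A s (IccExtend hab W' s ψ)‖ ≤ cst * |s - t₀| ^ k := by
        intro s hs
        have hs' : s ∈ Icc a b := uIoc_sub t₀ ht₀ t hs
        set x : Icc a b := ⟨s, hs'⟩ with hx
        have hproj : projIcc a b hab s = x := projIcc_of_mem hab hs'
        have hext : ∀ (Z : C(Icc a b, H →L[ℂ] H)), IccExtend hab Z s ψ = Z x ψ := by
          intro Z; rw [IccExtend, Function.comp_apply, hproj]
        rw [hext V', hext W']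
        have h1 : V' x ψ - W' x ψ = (V' x - W' x) ψ := rfl
        calc ‖A s (V' x ψ) - A s (W' x ψ)‖ = ‖A s ((V' x - W' x) ψ)‖ := by rw [← map_sub, h1]
          _ ≤ ‖A s‖ * ‖(V' x - W' x) ψ‖ := (A s).le_opNorm _
          _ ≤ L * (‖V' x - W' x‖ * ‖ψ‖) := by
              refine mul_le_mul (hL s hs') ((V' x - W' x).le_opNorm ψ) (norm_nonneg _) hL0
          _ ≤ L * (dist V W * (L ^ k * |s - t₀| ^ k / k.factorial) * ‖ψ‖) := by
              refine mul_le_mul_of_nonneg_left ?_ hL0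
              refine mul_le_mul_of_nonneg_right ?_ (norm_nonneg ψ)
              simpa using ih ⟨s, hs'⟩
          _ = cst * |s - t₀| ^ k := by rw [hcstdef]; ring
      have hgint : IntervalIntegrable (fun s => cst * |s - t₀| ^ k) volume t₀ (t : ℝ) :=
        (continuous_const.mul (((continuous_id.sub continuous_const).abs).pow k)).intervalIntegrable _ _
      calc ‖∫ s in t₀..(t : ℝ), (A s (IccExtend hab V' s ψ) - A s (IccExtend hab W' s ψ))‖
          ≤ |∫ s in t₀..(t : ℝ), cst * |s - t₀| ^ k| :=
            norm_integral_le_abs_of_norm_le (ae_restrict_of_forall_mem measurableSet_uIoc hpt) hgint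
        _ = cst * |∫ s in t₀..(t : ℝ), |s - t₀| ^ k| := by
            rw [intervalIntegral.integral_const_mul, abs_mul, abs_of_nonneg hcst0]
        _ ≤ cst * (|(t : ℝ) - t₀| ^ (k + 1) / (k + 1)) :=
            mul_le_mul_of_nonneg_left (abs_pow_integral t₀ (t : ℝ) k) hcst0
        _ = dist V W * (L ^ (k+1) * |(t : ℝ) - t₀| ^ (k+1) / (k+1).factorial) * ‖ψ‖ := by
            have hk1 : ((k : ℝ) + 1) ≠ 0 := by positivity
            have hkf : ((k.factorial : ℝ)) ≠ 0 := Nat.cast_ne_zero.2 k.factorial_ne_zero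
            rw [hcstdef, Nat.factorial_succ]
            push_cast
            field_simp

end iter

section key
variable {H : Type*} [NormedAddCommGroup H] [NormedSpace ℂ H] [CompleteSpace H]
variable (A : ℝ → H →L[ℂ] H) (t₀ : ℝ) (V₀ : H →L[ℂ] H) {a b : ℝ}
variable (hA : ∀ ψ : H, Continuous fun t => A t ψ)

include hA in
lemma key (ha : a ≤ t₀) (hb : t₀ ≤ b) :
    ∃ U : C(Icc a b, H →L[ℂ] H),
      (∀ (t : Icc a b) (ψ : H),
        U t ψ = V₀ ψ + ∫ s in t₀..(t : ℝ), A s (IccExtend (ha.trans hb) U s ψ)) ∧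
      ∀ U' : C(Icc a b, H →L[ℂ] H),
        (∀ (t : Icc a b) (ψ : H),
          U' t ψ = V₀ ψ + ∫ s in t₀..(t : ℝ), A s (IccExtend (ha.trans hb) U' s ψ)) → U' = U := by
  have hab : a ≤ b := ha.trans hb
  have ht₀ : t₀ ∈ Icc a b := ⟨ha, hb⟩
  obtain ⟨L, hL0, hL⟩ := aux_bound A hA a b
  set T := picT A t₀ V₀ hA hab ht₀ L hL0 hL with hT
  have hiff : ∀ U : C(Icc a b, H →L[ℂ] H),
      (∀ (t : Icc a b) (ψ : H),
        U t ψ = V₀ ψ + ∫ s in t₀..(t : ℝ), A s (IccExtend hab U s ψ)) ↔ IsFixedPt T U := by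
    intro U
    constructor
    · intro h
      apply ContinuousMap.ext; intro t
      apply ContinuousLinearMap.ext; intro ψ
      rw [hT]
      show (V₀ + opInt A t₀ hA hab ht₀ L hL0 hL U t) ψ = U t ψ
      rw [ContinuousLinearMap.add_apply, opInt_apply]
      exact (h t ψ).symm
    · intro h t ψ
      conv_lhs => rw [← h]
      show (V₀ + opInt A t₀ hA hab ht₀ L hL0 hL U t) ψ = _
      rw [ContinuousLinearMap.add_apply, opInt_apply]
  obtain ⟨k, hk⟩ : ∃ k : ℕ, L ^ k * (b - a) ^ k / k.factorial < 1 := by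
    have h1 := FloorSemiring.tendsto_pow_div_factorial_atTop (K := ℝ) (L * (b - a))
    obtain ⟨k, hk⟩ := (h1.eventually (gt_mem_nhds one_pos)).exists
    exact ⟨k, by rw [← mul_pow]; exact hk⟩
  have hc0 : (0:ℝ) ≤ L ^ k * (b - a) ^ k / k.factorial :=
    div_nonneg (mul_nonneg (pow_nonneg hL0 _) (pow_nonneg (sub_nonneg.2 hab) _))
      (Nat.cast_nonneg _)
  have hcontr : ContractingWith ⟨_, hc0⟩ (T^[k]) := by
    constructor
    · exact_mod_cast hk
    · refine LipschitzWith.of_dist_le_mul fun V W => ?_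
      refine (ContinuousMap.dist_le (mul_nonneg hc0 dist_nonneg)).2 (fun t => ?_)
      rw [dist_eq_norm]
      refine (iter_est A t₀ V₀ hA hab ht₀ L hL0 hL k V W t).trans ?_
      have h1 : |(t : ℝ) - t₀| ≤ b - a :=
        abs_sub_le_iff.2 ⟨by linarith [t.2.1, t.2.2, ht₀.1, ht₀.2],
          by linarith [t.2.1, t.2.2, ht₀.1, ht₀.2]⟩
      calc dist V W * (L ^ k * |(t : ℝ) - t₀| ^ k / k.factorial)
          ≤ dist V W * (L ^ k * (b - a) ^ k / k.factorial) := by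
            gcongr
        _ = (⟨_, hc0⟩ : NNReal) * dist V W := mul_comm _ _
  haveI : Nonempty C(Icc a b, H →L[ℂ] H) := ⟨0⟩
  set U := ContractingWith.fixedPoint (T^[k]) hcontr with hUdef
  have hUfix : IsFixedPt (T^[k]) U := hcontr.fixedPoint_isFixedPt
  have hTU : IsFixedPt T U := by
    have h1 : IsFixedPt (T^[k]) (T U) := by
      show (T^[k]) (T U) = T U
      rw [← Function.iterate_succ_apply, Function.iterate_succ_apply', hUfix.eq]
    have h2 := hcontr.fixedPoint_unique h1
    show T U = U
    rw [h2, hUdef]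
  refine ⟨U, (hiff U).2 hTU, fun U' hU' => ?_⟩
  have h3 := ((hiff U').1 hU').iterate k
  rw [hUdef]
  exact hcontr.fixedPoint_unique h3
end key

/-- Existence and uniqueness of the strong solution of `V'(t) = A(t)V(t)`, `V(t₀) = V₀`,
for a strongly continuous family `A` of bounded operators. -/
theorem stmt_5 {H : Type*} [NormedAddCommGroup H] [InnerProductSpace ℂ H] [CompleteSpace H]
    (A : ℝ → H →L[ℂ] H) (hA : ∀ ψ : H, Continuous fun t => A t ψ)
    (t₀ : ℝ) (V₀ : H →L[ℂ] H) :
    ∃! V : ℝ → H →L[ℂ] H, V t₀ = V₀ ∧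
      ∀ (ψ : H) (t : ℝ), HasDerivAt (fun s => V s ψ) (A t (V t ψ)) t := by
  have han : ∀ n : ℕ, (t₀ - (n+1) : ℝ) ≤ t₀ := fun n => by
    have := Nat.cast_nonneg (α := ℝ) n; linarith
  have hbn : ∀ n : ℕ, t₀ ≤ (t₀ + (n+1) : ℝ) := fun n => by
    have := Nat.cast_nonneg (α := ℝ) n; linarith
  choose Un hU1 hU2 using fun n : ℕ => key A t₀ V₀ hA (han n) (hbn n)
  have hmem : ∀ (n : ℕ) (t : ℝ), |t - t₀| ≤ n + 1 → t ∈ Icc (t₀ - (n+1)) (t₀ + (n+1)) := by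
    intro n t h
    rw [abs_sub_le_iff] at h
    exact ⟨by linarith [h.1, h.2], by linarith [h.1, h.2]⟩
  set nn : ℝ → ℕ := fun t => ⌈|t - t₀|⌉₊ with hnn_def
  have hnn : ∀ t, |t - t₀| ≤ nn t := fun t => Nat.le_ceil _
  have memn : ∀ t, t ∈ Icc (t₀ - (nn t + 1)) (t₀ + (nn t + 1)) :=
    fun t => hmem _ t (le_trans (hnn t) (by linarith))
  -- compatibility of the local solutions
  have compat : ∀ (m n : ℕ), m ≤ n → ∀ (t : ℝ)
      (htm : t ∈ Icc (t₀ - (m+1)) (t₀ + (m+1))) (htn : t ∈ Icc (t₀ - (n+1)) (t₀ + (n+1))),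
      Un n ⟨t, htn⟩ = Un m ⟨t, htm⟩ := by
    intro m n hmn t htm htn
    have hsub : Icc (t₀ - (m+1)) (t₀ + (m+1)) ⊆ Icc (t₀ - (n+1)) (t₀ + (n+1)) := by
      apply Icc_subset_Icc <;> · have : (m:ℝ) ≤ n := Nat.cast_le.2 hmn; linarith
    set R : C(Icc (t₀ - (m+1)) (t₀ + (m+1)), H →L[ℂ] H) :=
      ⟨fun x => Un n (Set.inclusion hsub x), (Un n).continuous.comp (continuous_inclusion hsub)⟩
      with hRdef
    have hprop : ∀ (x : Icc (t₀ - (m+1)) (t₀ + (m+1))) (ψ : H),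
        R x ψ = V₀ ψ + ∫ s in t₀..(x : ℝ),
          A s (IccExtend ((han m).trans (hbn m)) R s ψ) := by
      intro x ψ
      have h1 := hU1 n (Set.inclusion hsub x) ψ
      have hcoe : ((Set.inclusion hsub x : Icc (t₀ - (n+1)) (t₀ + (n+1))) : ℝ) = (x : ℝ) := rfl
      rw [hRdef]
      show Un n (Set.inclusion hsub x) ψ = _
      rw [h1, hcoe]
      congr 1
      refine intervalIntegral.integral_congr (fun s hs => ?_)
      have hsm : s ∈ Icc (t₀ - (m+1)) (t₀ + (m+1)) :=
        uIcc_subset_Icc ⟨by linarith [han m], by linarith [hbn m]⟩ x.2 hs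
      have hsn : s ∈ Icc (t₀ - (n+1)) (t₀ + (n+1)) := hsub hsm
      rw [IccExtend_of_mem _ _ hsn, IccExtend_of_mem _ _ hsm]
      rfl
    have := hU2 m R hprop
    calc Un n ⟨t, htn⟩ = R ⟨t, htm⟩ := rfl
      _ = Un m ⟨t, htm⟩ := by rw [this]
  set V : ℝ → H →L[ℂ] H := fun t => Un (nn t) ⟨t, memn t⟩ with hVdef
  have agree : ∀ (n : ℕ) (t : ℝ) (htn : t ∈ Icc (t₀ - (n+1)) (t₀ + (n+1))),
      V t = Un n ⟨t, htn⟩ := by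
    intro n t htn
    rcases le_total (nn t) n with h | h
    · exact (compat (nn t) n h t (memn t) htn).symm
    · exact compat n (nn t) h t htn (memn t)
  have hVinit : V t₀ = V₀ := by
    apply ContinuousLinearMap.ext; intro ψ
    have h1 := hU1 (nn t₀) ⟨t₀, memn t₀⟩ ψ
    have hcoe : ((⟨t₀, memn t₀⟩ : Icc (t₀ - (nn t₀+1)) (t₀ + (nn t₀+1))) : ℝ) = t₀ := rfl
    rw [hVdef]
    show Un (nn t₀) ⟨t₀, memn t₀⟩ ψ = V₀ ψ
    rw [h1, hcoe, intervalIntegral.integral_same, add_zero]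
  refine ⟨V, ⟨hVinit, ?_⟩, ?_⟩
  · -- the derivative property
    intro ψ t
    set n := nn t with hn
    have htn := memn t
    have hopen : t ∈ Ioo (t₀ - (n+1)) (t₀ + (n+1)) := by
      have h1 : |t - t₀| < n + 1 := lt_of_le_of_lt (hnn t) (by linarith)
      rw [abs_sub_lt_iff] at h1
      exact ⟨by linarith [h1.1, h1.2], by linarith [h1.1, h1.2]⟩
    have hab' := (han n).trans (hbn n)
    have hcont : Continuous fun s => A s (IccExtend hab' (Un n) s ψ) :=
      extCont A hA hab' (Un n) ψ
    have hF : HasDerivAt (fun s => V₀ ψ + ∫ u in t₀..s, A u (IccExtend hab' (Un n) u ψ))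
        (A t (IccExtend hab' (Un n) t ψ)) t := by
      refine HasDerivAt.const_add _ ?_
      exact intervalIntegral.integral_hasDerivAt_right (hcont.intervalIntegrable _ _)
        (hcont.stronglyMeasurable.stronglyMeasurableAtFilter) hcont.continuousAt
    have hev2 : (fun s => V s ψ) =ᶠ[𝓝 t]
        (fun s => V₀ ψ + ∫ u in t₀..s, A u (IccExtend hab' (Un n) u ψ)) := by
      filter_upwards [Ioo_mem_nhds hopen.1 hopen.2] with s hs
      have hsm : s ∈ Icc (t₀ - (n+1)) (t₀ + (n+1)) := Ioo_subset_Icc_self hs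
      rw [agree n s hsm, hU1 n ⟨s, hsm⟩ ψ]
    have h4 : IccExtend hab' (Un n) t ψ = V t ψ := by
      rw [IccExtend_of_mem _ _ htn, agree n t htn]
    rw [← h4]
    exact hF.congr_of_eventuallyEq hev2
  · -- uniqueness
    rintro W ⟨hW0, hWd⟩
    funext t
    set n := nn t with hn
    set a' := t₀ - (n+1 : ℝ) with ha'
    set b' := t₀ + (n+1 : ℝ) with hb'
    have hab' : a' ≤ b' := (han n).trans (hbn n)
    have ht₀' : t₀ ∈ Icc a' b' := ⟨han n, hbn n⟩
    have hWcont : ∀ ψ : H, Continuous fun s => W s ψ := fun ψ => by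
      rw [continuous_iff_continuousAt]; exact fun s => (hWd ψ s).continuousAt
    obtain ⟨M, hM0, hM⟩ := aux_bound W hWcont a' b'
    obtain ⟨L, hL0, hL⟩ := aux_bound A hA a' b'
    have hint : ∀ ψ : H, Continuous fun s => A s (W s ψ) :=
      fun ψ => aux_contApply A hA (hWcont ψ)
    have hFTC : ∀ (u v : ℝ) (ψ : H), W v ψ - W u ψ = ∫ s in u..v, A s (W s ψ) := fun u v ψ =>
      (integral_eq_sub_of_hasDerivAt (fun s _ => hWd ψ s) ((hint ψ).intervalIntegrable u v)).symm
    have hWc : Continuous fun x : Icc a' b' => W (x : ℝ) := by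
      have hlip : LipschitzWith (Real.toNNReal (L * M)) (fun x : Icc a' b' => W (x : ℝ)) := by
        refine LipschitzWith.of_dist_le_mul fun x y => ?_
        rw [dist_eq_norm, Real.coe_toNNReal _ (mul_nonneg hL0 hM0), Subtype.dist_eq,
          Real.dist_eq]
        refine ContinuousLinearMap.opNorm_le_bound _ (by positivity) (fun ψ => ?_)
        have heq : (W (x : ℝ) - W (y : ℝ)) ψ = ∫ s in (y : ℝ)..(x : ℝ), A s (W s ψ) := by
          rw [ContinuousLinearMap.sub_apply]; exact hFTC (y : ℝ) (x : ℝ) ψ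
        rw [heq]
        have hle : ∀ s ∈ Ι (y : ℝ) (x : ℝ), ‖A s (W s ψ)‖ ≤ L * M * ‖ψ‖ := by
          intro s hs
          have hs' : s ∈ Icc a' b' := uIcc_subset_Icc y.2 x.2 (Ioc_subset_Icc_self hs)
          calc ‖A s (W s ψ)‖ ≤ ‖A s‖ * ‖W s ψ‖ := (A s).le_opNorm _
            _ ≤ L * (M * ‖ψ‖) := by
                refine mul_le_mul (hL s hs') ?_ (norm_nonneg _) hL0
                exact ((W s).le_opNorm ψ).trans
                  (mul_le_mul_of_nonneg_right (hM s hs') (norm_nonneg _))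
            _ = L * M * ‖ψ‖ := by ring
        calc ‖∫ s in (y : ℝ)..(x : ℝ), A s (W s ψ)‖
            ≤ L * M * ‖ψ‖ * |(x : ℝ) - (y : ℝ)| := norm_integral_le_of_norm_le_const hle
          _ = L * M * |(x : ℝ) - (y : ℝ)| * ‖ψ‖ := by ring
      exact hlip.continuous
    set Wc : C(Icc a' b', H →L[ℂ] H) := ⟨fun x => W (x : ℝ), hWc⟩ with hWcdef
    have hprop : ∀ (x : Icc a' b') (ψ : H),
        Wc x ψ = V₀ ψ + ∫ s in t₀..(x : ℝ),
          A s (IccExtend ((han n).trans (hbn n)) Wc s ψ) := by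
      intro x ψ
      have h1 : Wc x ψ = W t₀ ψ + ∫ s in t₀..(x : ℝ), A s (W s ψ) := by
        show W (x : ℝ) ψ = _
        rw [← hFTC t₀ (x : ℝ) ψ]; abel
      rw [h1, hW0]
      congr 1
      refine intervalIntegral.integral_congr (fun s hs => ?_)
      have hsm : s ∈ Icc a' b' := uIcc_subset_Icc ht₀' x.2 hs
      rw [IccExtend_of_mem _ _ hsm]
      rfl
    have hWU := hU2 n Wc hprop
    calc W t = Wc ⟨t, memn t⟩ := rfl
      _ = Un n ⟨t, memn t⟩ := by rw [hWU]
      _ = V t := rfl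
end

section
/- Let H be a complex Hilbert space, A : ℝ → B(H) strongly continuous, and suppose V₁, V₂ : ℝ → B(H) are locally norm-bounded weak solutions of V'(t) = A(t)V(t) with the same initial condition V₁(t₀) = V₂(t₀), meaning that for all φ, ψ ∈ H the scalar functions t ↦ ⟨φ, V_i(t)ψ⟩ are differentiable with derivative ⟨φ, A(t)V_i(t)ψ⟩. Then V₁(t) = V₂(t) for all t ∈ ℝ. -/
open Set Filter Topology

private lemma aux_forward {H : Type*} [NormedAddCommGroup H] [InnerProductSpace ℂ H]
    [CompleteSpace H]
    (A V₁ V₂ : ℝ → H →L[ℂ] H) (hA : ∀ ψ : H, Continuous fun t => A t ψ) (t₀ : ℝ)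
    (hbd₁ : ∀ a b : ℝ, ∃ M : ℝ, ∀ t ∈ Set.Icc a b, ‖V₁ t‖ ≤ M)
    (hbd₂ : ∀ a b : ℝ, ∃ M : ℝ, ∀ t ∈ Set.Icc a b, ‖V₂ t‖ ≤ M)
    (hw₁ : ∀ (φ ψ : H) (t : ℝ),
      HasDerivAt (fun s => (inner ℂ φ (V₁ s ψ) : ℂ)) (inner ℂ φ (A t (V₁ t ψ)) : ℂ) t)
    (hw₂ : ∀ (φ ψ : H) (t : ℝ),
      HasDerivAt (fun s => (inner ℂ φ (V₂ s ψ) : ℂ)) (inner ℂ φ (A t (V₂ t ψ)) : ℂ) t)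
    (hinit : V₁ t₀ = V₂ t₀) :
    ∀ b : ℝ, t₀ ≤ b → ∀ ψ : H, V₁ b ψ = V₂ b ψ := by
  intro b hb ψ
  obtain ⟨M₁, hM₁⟩ := hbd₁ t₀ b
  obtain ⟨M₂, hM₂⟩ := hbd₂ t₀ b
  set K : ℝ := max ((M₁ + M₂) * ‖ψ‖) 0 with hK
  have hK0 : 0 ≤ K := le_max_right _ _
  have hKbd : ∀ t ∈ Set.Icc t₀ b, ‖V₁ t ψ - V₂ t ψ‖ ≤ K := by
    intro t ht
    refine le_trans (norm_sub_le _ _) (le_trans ?_ (le_max_left _ _))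
    calc ‖V₁ t ψ‖ + ‖V₂ t ψ‖ ≤ ‖V₁ t‖ * ‖ψ‖ + ‖V₂ t‖ * ‖ψ‖ :=
          add_le_add ((V₁ t).le_opNorm ψ) ((V₂ t).le_opNorm ψ)
      _ ≤ M₁ * ‖ψ‖ + M₂ * ‖ψ‖ := by
          gcongr <;> [exact hM₁ t ht; exact hM₂ t ht]
      _ = (M₁ + M₂) * ‖ψ‖ := by ring
  -- uniform bound on A on [t₀, b] via Banach–Steinhaus
  obtain ⟨C₀, hC₀⟩ : ∃ C₀ : ℝ, ∀ i : Set.Icc t₀ b, ‖A i‖ ≤ C₀ := by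
    apply banach_steinhaus
    intro x
    obtain ⟨C, hC⟩ := (isCompact_Icc (a := t₀) (b := b)).exists_bound_of_continuousOn
      ((hA x).continuousOn)
    exact ⟨C, fun i => hC i i.2⟩
  set C : ℝ := max C₀ 0 with hCdef
  have hC0 : 0 ≤ C := le_max_right _ _
  have hCbd : ∀ t ∈ Set.Icc t₀ b, ∀ y : H, ‖A t y‖ ≤ C * ‖y‖ := by
    intro t ht y
    calc ‖A t y‖ ≤ ‖A t‖ * ‖y‖ := (A t).le_opNorm y
      _ ≤ C * ‖y‖ := by
          gcongr
          exact le_trans (hC₀ ⟨t, ht⟩) (le_max_left _ _)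
  have key : ∀ n : ℕ, ∀ t ∈ Set.Icc t₀ b,
      ‖V₁ t ψ - V₂ t ψ‖ ≤ K * (C * (t - t₀)) ^ n / n.factorial := by
    intro n
    induction n with
    | zero => simpa using hKbd
    | succ n IH =>
      intro t ht
      set x : H := V₁ t ψ - V₂ t ψ with hxdef
      have hRnn : 0 ≤ K * (C * (t - t₀)) ^ (n + 1) / (n + 1).factorial := by
        have : 0 ≤ t - t₀ := sub_nonneg.2 ht.1
        positivity
      rcases eq_or_lt_of_le (norm_nonneg x) with hx0 | hx0
      · rw [← hx0]; exact hRnn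
      -- the scalar function and its derivative
      set g : ℝ → ℂ := fun s => (inner ℂ x (V₁ s ψ) : ℂ) - (inner ℂ x (V₂ s ψ) : ℂ) with hgdef
      set g' : ℝ → ℂ := fun s => (inner ℂ x (A s (V₁ s ψ)) : ℂ) - (inner ℂ x (A s (V₂ s ψ)) : ℂ)
        with hg'def
      have hg : ∀ s, HasDerivAt g (g' s) s := fun s => (hw₁ x ψ s).sub (hw₂ x ψ s)
      set D : ℝ := ‖x‖ * (K * C ^ (n + 1) / (n + 1).factorial) with hDdef
      set B : ℝ → ℝ := fun s => D * (s - t₀) ^ (n + 1) with hBdef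
      have hB : ∀ s, HasDerivAt B (D * ((n + 1) * (s - t₀) ^ n)) s := by
        intro s
        have h1 : HasDerivAt (fun s : ℝ => s - t₀) 1 s := by
          simpa using (hasDerivAt_id s).sub_const t₀
        have h2 := (h1.pow (n + 1)).const_mul D
        convert h2 using 1
        · rfl
        · rfl
        · funext y; rfl
        · show D * ((↑n + 1) * (s - t₀) ^ n) = D * (((n + 1 : ℕ) : ℝ) * (s - t₀) ^ n * 1)
          push_cast; ring
      have bound : ∀ s ∈ Set.Ico t₀ t, ‖g' s‖ ≤ D * ((n + 1) * (s - t₀) ^ n) := by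
        intro s hs
        have hsI : s ∈ Set.Icc t₀ b := ⟨hs.1, le_trans hs.2.le ht.2⟩
        have hst : 0 ≤ s - t₀ := sub_nonneg.2 hs.1
        have h1 : g' s = (inner ℂ x (A s (V₁ s ψ - V₂ s ψ)) : ℂ) := by
          simp [hg'def, inner_sub_right]
        rw [h1]
        calc ‖(inner ℂ x (A s (V₁ s ψ - V₂ s ψ)) : ℂ)‖
            ≤ ‖x‖ * ‖A s (V₁ s ψ - V₂ s ψ)‖ := norm_inner_le_norm _ _
          _ ≤ ‖x‖ * (C * ‖V₁ s ψ - V₂ s ψ‖) := by gcongr; exact hCbd s hsI _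
          _ ≤ ‖x‖ * (C * (K * (C * (s - t₀)) ^ n / n.factorial)) := by
              have := IH s hsI
              gcongr
          _ = D * ((n + 1) * (s - t₀) ^ n) := by
              rw [hDdef, mul_pow]
              have hfac : ((n + 1).factorial : ℝ) = (n + 1) * n.factorial := by
                rw [Nat.factorial_succ]; push_cast; ring
              have hnpos : (0 : ℝ) < n.factorial := by positivity
              have hn1pos : (0 : ℝ) < (n + 1 : ℝ) := by positivity
              rw [hfac]
              field_simp [hfac]
              ring
      have hga : ‖g t₀‖ ≤ B t₀ := by
        simp [hgdef, hBdef, hinit]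
      have hgcont : ContinuousOn g (Set.Icc t₀ t) :=
        fun s _ => ((hg s).continuousAt).continuousWithinAt
      have := image_norm_le_of_norm_deriv_right_le_deriv_boundary hgcont
        (fun s hs => (hg s).hasDerivWithinAt) hga hB bound (Set.right_mem_Icc.2 ht.1)
      -- now ‖x‖ * ‖x‖ ≤ ‖g t‖
      have hxx : ‖x‖ * ‖x‖ ≤ ‖g t‖ := by
        have h1 : g t = (inner ℂ x x : ℂ) := by simp only [hgdef, hxdef, inner_sub_right]
        rw [h1, ← sq]
        calc ‖x‖ ^ 2 = RCLike.re (inner ℂ x x : ℂ) := (inner_self_eq_norm_sq (𝕜 := ℂ) x).symm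
          _ ≤ |RCLike.re (inner ℂ x x : ℂ)| := le_abs_self _
          _ ≤ ‖(inner ℂ x x : ℂ)‖ := RCLike.abs_re_le_norm _
      replace this := le_trans hxx this
      have hBt : B t = ‖x‖ * (K * (C * (t - t₀)) ^ (n + 1) / (n + 1).factorial) := by
        rw [hBdef, hDdef, mul_pow]; ring
      rw [hBt] at this
      exact le_of_mul_le_mul_left this hx0
  have hbI : b ∈ Set.Icc t₀ b := Set.right_mem_Icc.2 hb
  have hlim : Filter.Tendsto (fun n : ℕ => K * (C * (b - t₀)) ^ n / n.factorial)
      Filter.atTop (𝓝 0) := by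
    have := FloorSemiring.tendsto_mul_pow_div_factorial_sub_atTop K (C * (b - t₀)) 0
    simpa using this
  have hle : ‖V₁ b ψ - V₂ b ψ‖ ≤ 0 :=
    ge_of_tendsto' hlim (fun n => key n b hbI)
  have : V₁ b ψ - V₂ b ψ = 0 :=
    norm_eq_zero.mp (le_antisymm hle (norm_nonneg _))
  exact sub_eq_zero.mp this

/-- Uniqueness of locally norm-bounded weak solutions of `V'(t) = A(t)V(t)`:
two such solutions with the same initial condition agree everywhere. -/
theorem stmt_6 {H : Type*} [NormedAddCommGroup H] [InnerProductSpace ℂ H] [CompleteSpace H]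
    (A V₁ V₂ : ℝ → H →L[ℂ] H) (hA : ∀ ψ : H, Continuous fun t => A t ψ) (t₀ : ℝ)
    (hbd₁ : ∀ a b : ℝ, ∃ M : ℝ, ∀ t ∈ Set.Icc a b, ‖V₁ t‖ ≤ M)
    (hbd₂ : ∀ a b : ℝ, ∃ M : ℝ, ∀ t ∈ Set.Icc a b, ‖V₂ t‖ ≤ M)
    (hw₁ : ∀ (φ ψ : H) (t : ℝ),
      HasDerivAt (fun s => (inner ℂ φ (V₁ s ψ) : ℂ)) (inner ℂ φ (A t (V₁ t ψ)) : ℂ) t)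
    (hw₂ : ∀ (φ ψ : H) (t : ℝ),
      HasDerivAt (fun s => (inner ℂ φ (V₂ s ψ) : ℂ)) (inner ℂ φ (A t (V₂ t ψ)) : ℂ) t)
    (hinit : V₁ t₀ = V₂ t₀) :
    ∀ t : ℝ, V₁ t = V₂ t := by
  intro t
  ext ψ
  rcases le_total t₀ t with h | h
  · exact aux_forward A V₁ V₂ hA t₀ hbd₁ hbd₂ hw₁ hw₂ hinit t h ψ
  · -- time reversal
    set A' : ℝ → H →L[ℂ] H := fun s => -(A (2 * t₀ - s)) with hA'def
    set W₁ : ℝ → H →L[ℂ] H := fun s => V₁ (2 * t₀ - s) with hW₁def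
    set W₂ : ℝ → H →L[ℂ] H := fun s => V₂ (2 * t₀ - s) with hW₂def
    have hr : ∀ s : ℝ, HasDerivAt (fun u : ℝ => 2 * t₀ - u) (-1) s := by
      intro s
      simpa using (hasDerivAt_id' s).const_sub (2 * t₀)
    have hA' : ∀ ψ : H, Continuous fun s => A' s ψ := by
      intro ψ
      have : Continuous fun s : ℝ => A (2 * t₀ - s) ψ :=
        (hA ψ).comp (by continuity)
      exact this.neg
    have hbd₁' : ∀ a b : ℝ, ∃ M : ℝ, ∀ s ∈ Set.Icc a b, ‖W₁ s‖ ≤ M := by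
      intro a b
      obtain ⟨M, hM⟩ := hbd₁ (2 * t₀ - b) (2 * t₀ - a)
      exact ⟨M, fun s hs => hM _ ⟨by linarith [hs.2], by linarith [hs.1]⟩⟩
    have hbd₂' : ∀ a b : ℝ, ∃ M : ℝ, ∀ s ∈ Set.Icc a b, ‖W₂ s‖ ≤ M := by
      intro a b
      obtain ⟨M, hM⟩ := hbd₂ (2 * t₀ - b) (2 * t₀ - a)
      exact ⟨M, fun s hs => hM _ ⟨by linarith [hs.2], by linarith [hs.1]⟩⟩
    have hw₁' : ∀ (φ ψ : H) (s : ℝ),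
        HasDerivAt (fun u => (inner ℂ φ (W₁ u ψ) : ℂ)) (inner ℂ φ (A' s (W₁ s ψ)) : ℂ) s := by
      intro φ ψ s
      have hcomp := HasDerivAt.comp_const_sub (2 * t₀) s (hw₁ φ ψ (2 * t₀ - s))
      have heq : -(inner ℂ φ (A (2 * t₀ - s) (V₁ (2 * t₀ - s) ψ)) : ℂ)
          = (inner ℂ φ (A' s (W₁ s ψ)) : ℂ) := by
        simp [hA'def, hW₁def, inner_neg_right]
      rw [heq] at hcomp
      exact hcomp
    have hw₂' : ∀ (φ ψ : H) (s : ℝ),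
        HasDerivAt (fun u => (inner ℂ φ (W₂ u ψ) : ℂ)) (inner ℂ φ (A' s (W₂ s ψ)) : ℂ) s := by
      intro φ ψ s
      have hcomp := HasDerivAt.comp_const_sub (2 * t₀) s (hw₂ φ ψ (2 * t₀ - s))
      have heq : -(inner ℂ φ (A (2 * t₀ - s) (V₂ (2 * t₀ - s) ψ)) : ℂ)
          = (inner ℂ φ (A' s (W₂ s ψ)) : ℂ) := by
        simp [hA'def, hW₂def, inner_neg_right]
      rw [heq] at hcomp
      exact hcomp
    have hinit' : W₁ t₀ = W₂ t₀ := by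
      have h2 : (2:ℝ) * t₀ - t₀ = t₀ := by ring
      simp only [hW₁def, hW₂def, h2, hinit]
    have hle : t₀ ≤ 2 * t₀ - t := by linarith
    have := aux_forward A' W₁ W₂ hA' t₀ hbd₁' hbd₂' hw₁' hw₂' hinit' (2 * t₀ - t) hle ψ
    simpa [hW₁def, hW₂def, show 2 * t₀ - (2 * t₀ - t) = t by ring] using this
end

section
/- Let H be a complex Hilbert space, A : ℝ → B(H) strongly continuous, and let V be the unique strong solution of V'(t) = A(t)V(t) with V(t₀) = V₀ where V₀ ∈ B(H) is invertible. Then V(t) is invertible for every t ∈ ℝ, and the inverse W(t) = V(t)⁻¹ is the strong solution of W'(t) = −W(t)A(t) with W(t₀) = V₀⁻¹. -/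
open Set Filter Topology

section Stmt8Aux

variable {H : Type*} [NormedAddCommGroup H] [NormedSpace ℂ H] [CompleteSpace H]

variable {H : Type*} [NormedAddCommGroup H] [NormedSpace ℂ H] [CompleteSpace H]

lemma stmt8_bdd (B : ℝ → H →L[ℂ] H) (hB : ∀ ψ : H, Continuous fun t => B t ψ)
    (a b : ℝ) : ∃ M, 0 ≤ M ∧ ∀ t ∈ Icc a b, ‖B t‖ ≤ M := by
  obtain ⟨C, hC⟩ := banach_steinhaus (ι := Icc a b) (g := fun i => B i.1) (fun x => by
    obtain ⟨C, hC⟩ := isCompact_Icc.exists_bound_of_continuousOn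
      ((hB x).continuousOn : ContinuousOn (fun t => B t x) (Icc a b))
    exact ⟨C, fun i => hC i i.2⟩)
  exact ⟨max C 0, le_max_right _ _, fun t ht => (hC ⟨t, ht⟩).trans (le_max_left _ _)⟩

lemma stmt8_lip (A V : ℝ → H →L[ℂ] H) (hA : ∀ ψ : H, Continuous fun t => A t ψ)
    (hV : ∀ (ψ : H) (t : ℝ), HasDerivAt (fun s => V s ψ) (A t (V t ψ)) t)
    (a b : ℝ) : ∃ L, 0 ≤ L ∧ ∀ s ∈ Icc a b, ∀ u ∈ Icc a b, ‖V s - V u‖ ≤ L * |s - u| := by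
  have hVc : ∀ ψ : H, Continuous fun t => V t ψ :=
    fun ψ => continuous_iff_continuousAt.2 fun t => (hV ψ t).continuousAt
  obtain ⟨MA, hMA0, hMA⟩ := stmt8_bdd A hA a b
  obtain ⟨MV, hMV0, hMV⟩ := stmt8_bdd V hVc a b
  refine ⟨MA * MV, by positivity, fun s hs u hu => ?_⟩
  refine ContinuousLinearMap.opNorm_le_bound _ (by positivity) fun ψ => ?_
  have key : ‖V s ψ - V u ψ‖ ≤ (MA * (MV * ‖ψ‖)) * ‖s - u‖ := by
    refine Convex.norm_image_sub_le_of_norm_hasDerivWithin_le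
      (f := fun r => V r ψ) (f' := fun r => A r (V r ψ)) (s := Icc a b)
      (fun r hr => (hV ψ r).hasDerivWithinAt) (fun r hr => ?_) (convex_Icc a b) hu hs
    calc ‖A r (V r ψ)‖ ≤ ‖A r‖ * ‖V r ψ‖ := (A r).le_opNorm _
      _ ≤ MA * (MV * ‖ψ‖) := by
          refine mul_le_mul (hMA r hr) ?_ (norm_nonneg _) hMA0
          calc ‖V r ψ‖ ≤ ‖V r‖ * ‖ψ‖ := (V r).le_opNorm _
            _ ≤ MV * ‖ψ‖ := by gcongr; exact hMV r hr
  calc ‖(V s - V u) ψ‖ = ‖V s ψ - V u ψ‖ := by simp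
    _ ≤ (MA * (MV * ‖ψ‖)) * ‖s - u‖ := key
    _ = MA * MV * |s - u| * ‖ψ‖ := by rw [Real.norm_eq_abs]; ring

lemma stmt8_low (A V : ℝ → H →L[ℂ] H) (hA : ∀ ψ : H, Continuous fun t => A t ψ)
    (hV : ∀ (ψ : H) (t : ℝ), HasDerivAt (fun s => V s ψ) (A t (V t ψ)) t)
    (t₀ : ℝ) (W₀ : H →L[ℂ] H) (hW : ∀ ψ : H, W₀ (V t₀ ψ) = ψ)
    (a b : ℝ) (ha : a ≤ t₀) (hb : t₀ ≤ b) :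
    ∃ c, 0 < c ∧ ∀ s ∈ Icc a b, ∀ ψ : H, c * ‖ψ‖ ≤ ‖V s ψ‖ := by
  have hVc : ∀ ψ : H, Continuous fun t => V t ψ :=
    fun ψ => continuous_iff_continuousAt.2 fun t => (hV ψ t).continuousAt
  obtain ⟨MA, hMA0, hMA⟩ := stmt8_bdd A hA a b
  set E : ℝ := max 1 ‖W₀‖ * Real.exp (MA * (b - a)) with hE
  have hE1 : 1 ≤ max 1 ‖W₀‖ := le_max_left _ _
  have hEpos : 0 < E := by positivity
  refine ⟨E⁻¹, by positivity, fun s hs ψ => ?_⟩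
  -- key : ‖V t₀ ψ‖ ≤ ‖V s ψ‖ * exp (MA * (b - a))
  have key : ‖V t₀ ψ‖ ≤ ‖V s ψ‖ * Real.exp (MA * (b - a)) := by
    rcases le_total s t₀ with hst | hst
    · have := norm_le_gronwallBound_of_norm_deriv_right_le (f := fun r => V r ψ)
        (f' := fun r => A r (V r ψ)) (δ := ‖V s ψ‖) (K := MA) (ε := 0) (a := s) (b := t₀)
        ((hVc ψ).continuousOn) (fun x hx => (hV ψ x).hasDerivWithinAt) le_rfl
        (fun x hx => by
          have hxab : x ∈ Icc a b := ⟨hs.1.trans hx.1, hx.2.le.trans hb⟩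
          calc ‖A x (V x ψ)‖ ≤ ‖A x‖ * ‖V x ψ‖ := (A x).le_opNorm _
            _ ≤ MA * ‖V x ψ‖ + 0 := by
                rw [add_zero]; exact mul_le_mul_of_nonneg_right (hMA x hxab) (norm_nonneg _))
        t₀ ⟨hst, le_rfl⟩
      rw [gronwallBound_ε0] at this
      refine this.trans (mul_le_mul_of_nonneg_left (Real.exp_le_exp.2
        (mul_le_mul_of_nonneg_left (by have := hs.1; have := hs.2; linarith) hMA0))
        (norm_nonneg _))
    · -- t₀ ≤ s ; reverse time
      have hderiv : ∀ r : ℝ, HasDerivAt (fun r => V (s + t₀ - r) ψ)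
          ((-1 : ℝ) • A (s + t₀ - r) (V (s + t₀ - r) ψ)) r := by
        intro r
        have hg : HasDerivAt (fun r : ℝ => s + t₀ - r) (-1) r := by
          simpa using (hasDerivAt_id' r).const_sub (s + t₀)
        exact (hV ψ (s + t₀ - r)).scomp r hg
      have := norm_le_gronwallBound_of_norm_deriv_right_le
        (f := fun r => V (s + t₀ - r) ψ)
        (f' := fun r => (-1 : ℝ) • A (s + t₀ - r) (V (s + t₀ - r) ψ))
        (δ := ‖V s ψ‖) (K := MA) (ε := 0) (a := t₀) (b := s)
        (Continuous.continuousOn (by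
          exact (hVc ψ).comp (by continuity)))
        (fun x hx => (hderiv x).hasDerivWithinAt)
        (by simp)
        (fun x hx => by
          have hxab : s + t₀ - x ∈ Icc a b := by
            constructor <;> [linarith [hx.2.le, hs.1] ; linarith [hx.1, hs.2]]
          calc ‖(-1 : ℝ) • A (s + t₀ - x) (V (s + t₀ - x) ψ)‖
              = ‖A (s + t₀ - x) (V (s + t₀ - x) ψ)‖ := by simp
            _ ≤ ‖A (s + t₀ - x)‖ * ‖V (s + t₀ - x) ψ‖ := (A _).le_opNorm _
            _ ≤ MA * ‖V (s + t₀ - x) ψ‖ + 0 := by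
                rw [add_zero]; exact mul_le_mul_of_nonneg_right (hMA _ hxab) (norm_nonneg _))
        s ⟨hst, le_rfl⟩
      rw [gronwallBound_ε0] at this
      simp only [add_sub_cancel_right, add_sub_cancel_left] at this
      refine this.trans (mul_le_mul_of_nonneg_left (Real.exp_le_exp.2
        (mul_le_mul_of_nonneg_left (by have := hs.1; have := hs.2; linarith) hMA0))
        (norm_nonneg _))
  have h1 : ‖ψ‖ ≤ E * ‖V s ψ‖ := by
    calc ‖ψ‖ = ‖W₀ (V t₀ ψ)‖ := by rw [hW]
      _ ≤ ‖W₀‖ * ‖V t₀ ψ‖ := W₀.le_opNorm _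
      _ ≤ max 1 ‖W₀‖ * (‖V s ψ‖ * Real.exp (MA * (b - a))) := by
          refine mul_le_mul (le_max_right _ _) key (norm_nonneg _) (by positivity)
      _ = E * ‖V s ψ‖ := by rw [hE]; ring
  rw [inv_mul_le_iff₀ hEpos]
  exact h1

end Stmt8Aux

/-- If `V` is the strong solution of `V'(t) = A(t)V(t)` with invertible initial condition `V₀`,
then `V(t)` is invertible for every `t`, and the inverse `W(t) = V(t)⁻¹` is the strong solution
of `W'(t) = -W(t)A(t)` with `W(t₀) = V₀⁻¹`. -/
theorem stmt_8 {H : Type*} [NormedAddCommGroup H] [InnerProductSpace ℂ H] [CompleteSpace H]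
    (A : ℝ → H →L[ℂ] H) (hA : ∀ ψ : H, Continuous fun t => A t ψ)
    (t₀ : ℝ) (V₀ W₀ : H →L[ℂ] H)
    (hW₀ : W₀ * V₀ = 1 ∧ V₀ * W₀ = 1)
    (V : ℝ → H →L[ℂ] H) (hVinit : V t₀ = V₀)
    (hV : ∀ (ψ : H) (t : ℝ), HasDerivAt (fun s => V s ψ) (A t (V t ψ)) t) :
    ∃ W : ℝ → H →L[ℂ] H, W t₀ = W₀ ∧
      (∀ t : ℝ, W t * V t = 1 ∧ V t * W t = 1) ∧
      ∀ (ψ : H) (t : ℝ), HasDerivAt (fun s => W s ψ) (-(W t (A t ψ))) t := by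
  have hWV₀ : ∀ ψ : H, W₀ (V t₀ ψ) = ψ := by
    intro ψ
    have := congrArg (fun T : H →L[ℂ] H => T ψ) hW₀.1
    simpa [hVinit, ContinuousLinearMap.mul_apply] using this
  -- continuity of V in operator norm
  have hVcont : Continuous V := by
    rw [continuous_iff_continuousAt]
    intro t
    obtain ⟨L, hL0, hL⟩ := stmt8_lip A V hA hV (t - 1) (t + 1)
    rw [ContinuousAt, tendsto_iff_norm_sub_tendsto_zero]
    refine squeeze_zero' (g := fun s => L * |s - t|)
      (Eventually.of_forall fun s => norm_nonneg _) ?_ ?_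
    · filter_upwards [Icc_mem_nhds (by linarith : t - 1 < t) (by linarith : t < t + 1)] with s hs
      exact hL s hs t ⟨by linarith, by linarith⟩
    · have : Tendsto (fun s => L * |s - t|) (𝓝 t) (𝓝 (L * |t - t|)) := by
        exact Filter.Tendsto.const_mul L (((continuous_id.sub continuous_const).abs).tendsto t)
      simpa using this
  -- invertibility everywhere
  have hU : ∀ t, IsUnit (V t) := by
    have hSopen : IsOpen {t : ℝ | IsUnit (V t)} := Units.isOpen.preimage hVcont
    have hSclosed : IsClosed {t : ℝ | IsUnit (V t)} := by
      refine isClosed_of_closure_subset fun t ht => ?_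
      obtain ⟨c, hc0, hc⟩ := stmt8_low A V hA hV t₀ W₀ hWV₀
        (min (t - 1) t₀) (max (t + 1) t₀) (min_le_right _ _) (le_max_right _ _)
      obtain ⟨L, hL0, hL⟩ := stmt8_lip A V hA hV (min (t - 1) t₀) (max (t + 1) t₀)
      have htmem : t ∈ Icc (min (t - 1) t₀) (max (t + 1) t₀) :=
        ⟨(min_le_left _ _).trans (by linarith), le_trans (by linarith) (le_max_left _ _)⟩
      obtain ⟨s, hsS, hst⟩ := Metric.mem_closure_iff.1 ht (min 1 (c / (L + 1)))
        (lt_min one_pos (by positivity))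
      obtain ⟨u, hu⟩ := hsS
      have hsmem : s ∈ Icc (min (t - 1) t₀) (max (t + 1) t₀) := by
        have h1 : |t - s| < 1 := lt_of_lt_of_le (by simpa [Real.dist_eq] using hst) (min_le_left _ _)
        rw [abs_lt] at h1
        exact ⟨(min_le_left _ _).trans (by linarith), le_trans (by linarith) (le_max_left _ _)⟩
      -- norm bound on u⁻¹
      by_cases h0 : (1 : H →L[ℂ] H) = 0
      · have : Subsingleton (H →L[ℂ] H) := subsingleton_of_zero_eq_one h0.symm
        exact ⟨u, Subsingleton.elim _ _⟩
      have hinvle : ‖((u⁻¹ : (H →L[ℂ] H)ˣ) : H →L[ℂ] H)‖ ≤ c⁻¹ := by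
        refine ContinuousLinearMap.opNorm_le_bound _ (by positivity) fun φ => ?_
        have h1 : c * ‖((u⁻¹ : (H →L[ℂ] H)ˣ) : H →L[ℂ] H) φ‖ ≤ ‖V s (((u⁻¹ : (H →L[ℂ] H)ˣ) : H →L[ℂ] H) φ)‖ :=
          hc s hsmem _
        have h2 : V s (((u⁻¹ : (H →L[ℂ] H)ˣ) : H →L[ℂ] H) φ) = φ := by
          have := congrArg (fun T : H →L[ℂ] H => T φ) u.mul_inv
          simpa [hu, ContinuousLinearMap.mul_apply] using this
        rw [h2] at h1
        calc ‖((u⁻¹ : (H →L[ℂ] H)ˣ) : H →L[ℂ] H) φ‖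
            = c⁻¹ * (c * ‖((u⁻¹ : (H →L[ℂ] H)ˣ) : H →L[ℂ] H) φ‖) := by
              field_simp
          _ ≤ c⁻¹ * ‖φ‖ := mul_le_mul_of_nonneg_left h1 (by positivity)
      have hinvpos : 0 < ‖((u⁻¹ : (H →L[ℂ] H)ˣ) : H →L[ℂ] H)‖ := by
        rcases eq_or_lt_of_le (norm_nonneg ((u⁻¹ : (H →L[ℂ] H)ˣ) : H →L[ℂ] H)) with h | h
        · exfalso
          have hz : ((u⁻¹ : (H →L[ℂ] H)ˣ) : H →L[ℂ] H) = 0 := by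
            rwa [eq_comm, norm_eq_zero] at h
          exact h0 (by rw [← u.mul_inv, hz, mul_zero])
        · exact h
      have hnear : ‖V t - (u : H →L[ℂ] H)‖ < ‖((u⁻¹ : (H →L[ℂ] H)ˣ) : H →L[ℂ] H)‖⁻¹ := by
        have hVts : ‖V t - V s‖ ≤ L * |t - s| := hL t htmem s hsmem
        have hts : |t - s| < c / (L + 1) :=
          lt_of_lt_of_le (by simpa [Real.dist_eq] using hst) (min_le_right _ _)
        have h3 : ‖V t - V s‖ < c := by
          have : L * |t - s| < c := by
            have h4 : L * |t - s| ≤ L * (c / (L + 1)) :=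
              mul_le_mul_of_nonneg_left hts.le hL0
            have h5 : L * (c / (L + 1)) < c := by
              rw [mul_div_assoc', div_lt_iff₀ (by linarith : (0:ℝ) < L + 1)]
              nlinarith
            linarith
          linarith
        have h6 : c ≤ ‖((u⁻¹ : (H →L[ℂ] H)ˣ) : H →L[ℂ] H)‖⁻¹ := by
          rw [le_inv_comm₀ hc0 hinvpos]
          exact hinvle
        rw [hu]
        exact lt_of_lt_of_le h3 h6
      exact ⟨Units.ofNearby u (V t) hnear, by simp⟩
    have := IsClopen.eq_univ (s := {t : ℝ | IsUnit (V t)}) ⟨hSclosed, hSopen⟩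
      ⟨t₀, ⟨⟨V₀, W₀, hW₀.2, hW₀.1⟩, hVinit.symm⟩⟩
    intro t; exact (Set.eq_univ_iff_forall.1 this) t
  -- define W as the pointwise inverse
  set W : ℝ → H →L[ℂ] H := fun t => Ring.inverse (V t) with hWdef
  have hWV : ∀ t, W t * V t = 1 := fun t => Ring.inverse_mul_cancel _ (hU t)
  have hVW : ∀ t, V t * W t = 1 := fun t => Ring.mul_inverse_cancel _ (hU t)
  have hWVa : ∀ t φ, W t (V t φ) = φ := fun t φ => by
    have := congrArg (fun T : H →L[ℂ] H => T φ) (hWV t)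
    simpa [ContinuousLinearMap.mul_apply] using this
  have hVWa : ∀ t φ, V t (W t φ) = φ := fun t φ => by
    have := congrArg (fun T : H →L[ℂ] H => T φ) (hVW t)
    simpa [ContinuousLinearMap.mul_apply] using this
  have hWt₀ : W t₀ = W₀ := by
    calc W t₀ = 1 * W t₀ := (one_mul _).symm
      _ = (W₀ * V₀) * W t₀ := by rw [hW₀.1]
      _ = W₀ * (V t₀ * W t₀) := by rw [hVinit, mul_assoc]
      _ = W₀ := by rw [hVW t₀, mul_one]
  refine ⟨W, hWt₀, fun t => ⟨hWV t, hVW t⟩, fun ψ t => ?_⟩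
  -- derivative of W
  obtain ⟨c, hc0, hc⟩ := stmt8_low A V hA hV t₀ W₀ hWV₀ (min (t - 1) t₀) (max (t + 1) t₀)
    (min_le_right _ _) (le_max_right _ _)
  obtain ⟨L, hL0, hL⟩ := stmt8_lip A V hA hV (min (t - 1) t₀) (max (t + 1) t₀)
  have hWbd : ∀ s ∈ Icc (min (t - 1) t₀) (max (t + 1) t₀), ∀ φ : H, ‖W s φ‖ ≤ c⁻¹ * ‖φ‖ := by
    intro s hs φ
    have h1 := hc s hs (W s φ)
    rw [hVWa] at h1
    calc ‖W s φ‖ = c⁻¹ * (c * ‖W s φ‖) := by field_simp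
      _ ≤ c⁻¹ * ‖φ‖ := mul_le_mul_of_nonneg_left h1 (by positivity)
  have htmem : t ∈ Icc (min (t - 1) t₀) (max (t + 1) t₀) :=
    ⟨(min_le_left _ _).trans (by linarith), le_trans (by linarith) (le_max_left _ _)⟩
  set x := A t ψ with hx
  set g : ℝ → H := slope (fun r => V r (W t ψ)) t with hg
  have hgx : Tendsto g (𝓝[≠] t) (𝓝 x) := by
    have h1 := hasDerivAt_iff_tendsto_slope.1 (hV (W t ψ) t)
    rwa [hVWa t ψ] at h1
  have hident : slope (fun r => W r ψ) t = fun s => -(W s (g s)) := by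
    funext s
    have e1 : V t (W t ψ) = ψ := hVWa t ψ
    have e2 : W s (V s (W t ψ)) = W t ψ := hWVa s (W t ψ)
    simp only [hg, slope, vsub_eq_sub]
    rw [ContinuousLinearMap.map_smul_of_tower, map_sub, e2]
    rw [e1]
    rw [smul_sub, smul_sub, neg_sub]
  have hkey : Tendsto (fun s => W s (g s)) (𝓝[≠] t) (𝓝 (W t x)) := by
    rw [tendsto_iff_norm_sub_tendsto_zero]
    refine squeeze_zero'
      (g := fun s => c⁻¹ * ‖g s - x‖ + c⁻¹ * (L * |t - s|) * ‖W t x‖)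
      (Eventually.of_forall fun s => norm_nonneg _) ?_ ?_
    · filter_upwards [eventually_nhdsWithin_of_eventually_nhds
        (Icc_mem_nhds (show (t - 1) ⊓ t₀ < t from
            lt_of_le_of_lt (min_le_left _ _) (by linarith))
          (show t < (t + 1) ⊔ t₀ from
            lt_of_lt_of_le (by linarith) (le_max_left _ _)))] with s hs
      have b1 : ‖W s (g s) - W s x‖ ≤ c⁻¹ * ‖g s - x‖ := by
        rw [← map_sub]; exact hWbd s hs _
      have b2 : ‖W s x - W t x‖ ≤ c⁻¹ * (L * |t - s|) * ‖W t x‖ := by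
        have e3 : W s x - W t x = W s (V t (W t x) - V s (W t x)) := by
          rw [map_sub, hVWa t x, hWVa s (W t x)]
        calc ‖W s x - W t x‖ = ‖W s (V t (W t x) - V s (W t x))‖ := by rw [e3]
          _ ≤ c⁻¹ * ‖V t (W t x) - V s (W t x)‖ := hWbd s hs _
          _ = c⁻¹ * ‖(V t - V s) (W t x)‖ := by simp
          _ ≤ c⁻¹ * (‖V t - V s‖ * ‖W t x‖) :=
              mul_le_mul_of_nonneg_left ((V t - V s).le_opNorm _) (by positivity)
          _ ≤ c⁻¹ * ((L * |t - s|) * ‖W t x‖) := by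
              refine mul_le_mul_of_nonneg_left
                (mul_le_mul_of_nonneg_right (hL t htmem s hs) (norm_nonneg _)) (by positivity)
          _ = c⁻¹ * (L * |t - s|) * ‖W t x‖ := by ring
      calc ‖W s (g s) - W t x‖
          ≤ ‖W s (g s) - W s x‖ + ‖W s x - W t x‖ := by
            have := dist_triangle (W s (g s)) (W s x) (W t x)
            simpa [dist_eq_norm] using this
        _ ≤ c⁻¹ * ‖g s - x‖ + c⁻¹ * (L * |t - s|) * ‖W t x‖ := add_le_add b1 b2
    · have t1 : Tendsto (fun s => c⁻¹ * ‖g s - x‖) (𝓝[≠] t) (𝓝 0) := by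
        have := (tendsto_iff_norm_sub_tendsto_zero.1 hgx).const_mul c⁻¹
        simpa using this
      have t2 : Tendsto (fun s => c⁻¹ * (L * |t - s|) * ‖W t x‖) (𝓝[≠] t) (𝓝 0) := by
        have hco : Continuous fun s : ℝ => c⁻¹ * (L * |t - s|) * ‖W t x‖ := by
          exact (continuous_const.mul (continuous_const.mul
            (continuous_const.sub continuous_id).abs)).mul continuous_const
        have h7 : Tendsto (fun s : ℝ => c⁻¹ * (L * |t - s|) * ‖W t x‖) (𝓝[≠] t)
            (𝓝 (c⁻¹ * (L * |t - t|) * ‖W t x‖)) :=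
          (hco.tendsto t).mono_left nhdsWithin_le_nhds
        simpa using h7
      simpa using t1.add t2
  rw [hasDerivAt_iff_tendsto_slope, hident]
  exact hkey.neg
end

section
/- Let H be a complex Hilbert space and H(t) = −iA(t) where A : ℝ → B(H) is strongly continuous with each A(t) skew-adjoint (i.e., H(t) bounded self-adjoint). Then the unique strong solution V of V'(t) = A(t)V(t) with V(0) = 1 is unitary for all t ∈ ℝ, and U(t,s) := V(t)V(s)⁻¹ defines a two-parameter unitary family satisfying the cocycle property U(t,s)U(s,r) = U(t,r) and the propagator equation d/dt U(t,s)ψ = −iH(t)U(t,s)ψ for all ψ ∈ H. -/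
open Set ContinuousLinearMap

section stmt9aux
variable {H : Type*} [NormedAddCommGroup H] [InnerProductSpace ℂ H] [CompleteSpace H]

lemma stmt9_isom (A : ℝ → H →L[ℂ] H)
    (hskew : ∀ t : ℝ, ContinuousLinearMap.adjoint (A t) = -(A t))
    (V : ℝ → H →L[ℂ] H) (hV0 : V 0 = 1)
    (hV : ∀ (ψ : H) (t : ℝ), HasDerivAt (fun s => V s ψ) (A t (V t ψ)) t) :
    ∀ t : ℝ, ContinuousLinearMap.adjoint (V t) * V t = 1 := by
  intro t
  ext ψ
  rw [ContinuousLinearMap.mul_apply, ContinuousLinearMap.one_apply]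
  refine ext_inner_left ℂ fun φ => ?_
  rw [ContinuousLinearMap.adjoint_inner_right]
  have hd : ∀ τ : ℝ, HasDerivAt (fun τ => (inner ℂ (V τ φ) (V τ ψ) : ℂ)) 0 τ := by
    intro τ
    have h := (hV φ τ).inner ℂ (hV ψ τ)
    rw [← ContinuousLinearMap.adjoint_inner_right (A τ), hskew τ] at h
    simpa using h
  have hconst := is_const_of_deriv_eq_zero (f := fun τ => (inner ℂ (V τ φ) (V τ ψ) : ℂ))
    (fun τ => (hd τ).differentiableAt) (fun τ => (hd τ).deriv) t 0
  simpa [hV0] using hconst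

variable {H : Type*} [NormedAddCommGroup H] [InnerProductSpace ℂ H] [CompleteSpace H]

lemma stmt9_surj (A : ℝ → H →L[ℂ] H) (hA : ∀ ψ : H, Continuous fun t => A t ψ)
    (V : ℝ → H →L[ℂ] H) (hV0 : V 0 = 1)
    (hV : ∀ (ψ : H) (t : ℝ), HasDerivAt (fun s => V s ψ) (A t (V t ψ)) t) :
    ∀ t : ℝ, Function.Surjective (V t) := by
  intro tstar
  set T : ℝ := |tstar| + 1 with hTdef
  have hTpos : 0 < T := by positivity
  have htstarT : |tstar| ≤ T := by simp [hTdef]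
  -- uniform bound on ‖A s‖ on [-T, T]
  obtain ⟨M, hM1, hM⟩ : ∃ M : ℝ, 1 ≤ M ∧ ∀ s ∈ Icc (-T) T, ‖A s‖ ≤ M := by
    obtain ⟨C, hC⟩ := banach_steinhaus (ι := Icc (-T) T) (g := fun s : Icc (-T) T => A s.1)
      (fun x => by
        obtain ⟨C, hC⟩ := isCompact_Icc.exists_bound_of_continuousOn (hA x).continuousOn
        exact ⟨C, fun i => hC i i.2⟩)
    exact ⟨max C 1, le_max_right _ _, fun s hs => (hC ⟨s, hs⟩).trans (le_max_left _ _)⟩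
  have hM0 : 0 < M := lt_of_lt_of_le one_pos hM1
  set δ : ℝ := 1 / (2 * M) with hδdef
  have hδpos : 0 < δ := by positivity
  have hMδ : M * δ = 1 / 2 := by rw [hδdef]; field_simp
  set K : NNReal := ⟨M, hM0.le⟩ with hKdef
  -- step lemma
  have step : ∀ t₀ t : ℝ, t₀ ∈ Icc (-T) T → t ∈ Icc (-T) T → |t - t₀| ≤ δ →
      Function.Surjective (V t₀) → Function.Surjective (V t) := by
    intro t₀ t ht₀ ht hd hsurj φ
    set tMin : ℝ := max (-T) (t - δ) with htMin
    set tMax : ℝ := min T (t + δ) with htMax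
    have htmem : t ∈ Icc tMin tMax :=
      ⟨max_le ht.1 (by linarith), le_min ht.2 (by linarith)⟩
    have hsub : Icc tMin tMax ⊆ Icc (-T) T :=
      Icc_subset_Icc (le_max_left _ _) (min_le_left _ _)
    have hdd := abs_le.mp hd
    have ht₀mem : t₀ ∈ Icc tMin tMax :=
      ⟨max_le ht₀.1 (by linarith [hdd.2]), le_min ht₀.2 (by linarith [hdd.1])⟩
    -- Picard-Lindelöf existence through (t, φ)
    have hpl : IsPicardLindelof (fun s x => A s x) (tmin := tMin) (tmax := tMax) ⟨t, htmem⟩ φ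
        ⟨‖φ‖ + 1, by positivity⟩ 0 ⟨M * (2 * ‖φ‖ + 1), by positivity⟩ K := by
      refine ⟨?_, fun x _ => (hA x).continuousOn, ?_, ?_⟩
      · intro s hs
        refine ((A s).lipschitz.weaken ?_).lipschitzOnWith
        rw [← NNReal.coe_le_coe]
        exact hM s (hsub hs)
      · intro s hs x hx
        have hx' : ‖x‖ ≤ 2 * ‖φ‖ + 1 := by
          have := norm_le_norm_add_norm_sub' x φ
          have h2 : ‖x - φ‖ ≤ ‖φ‖ + 1 := by
            rw [← dist_eq_norm]; exact Metric.mem_closedBall.mp hx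
          have h3 := norm_sub_norm_le x φ
          linarith [norm_nonneg φ]
        calc ‖A s x‖ ≤ ‖A s‖ * ‖x‖ := (A s).le_opNorm x
          _ ≤ M * (2 * ‖φ‖ + 1) :=
            mul_le_mul (hM s (hsub hs)) hx' (norm_nonneg x) hM0.le
      · show M * (2 * ‖φ‖ + 1) * max (tMax - t) (t - tMin) ≤ ‖φ‖ + 1 - ((0 : NNReal) : ℝ)
        rw [NNReal.coe_zero, sub_zero]
        have hmax : max (tMax - t) (t - tMin) ≤ δ := by
          apply max_le <;> [linarith [min_le_right T (t + δ)]; linarith [le_max_right (-T) (t - δ)]]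
        calc M * (2 * ‖φ‖ + 1) * max (tMax - t) (t - tMin)
            ≤ M * (2 * ‖φ‖ + 1) * δ := by
              apply mul_le_mul_of_nonneg_left hmax (by positivity)
          _ ≤ ‖φ‖ + 1 := by nlinarith [norm_nonneg φ]
    obtain ⟨f, hft, hfd⟩ := hpl.exists_eq_forall_mem_Icc_hasDerivWithinAt (Metric.mem_closedBall_self le_rfl)
    obtain ⟨ξ, hξ⟩ := hsurj (f t₀)
    -- clamped vector field for uniqueness
    set v : ℝ → H → H := fun s x => A (max (-T) (min T s)) x with hvdef
    have hclamp : ∀ s : ℝ, max (-T) (min T s) ∈ Icc (-T) T :=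
      fun s => ⟨le_max_left _ _, max_le (neg_le_self hTpos.le) (min_le_left _ _)⟩
    have hvLip : ∀ s, LipschitzOnWith K (v s) univ := by
      intro s
      refine ((A _).lipschitz.weaken ?_).lipschitzOnWith
      rw [← NNReal.coe_le_coe]
      exact hM _ (hclamp s)
    have hveq : ∀ s ∈ Icc (-T) T, ∀ x : H, v s x = A s x := by
      intro s hs x
      simp only [hvdef, min_eq_right hs.2, max_eq_right hs.1]
    have hfcont : ContinuousOn f (Icc tMin tMax) :=
      fun s hs => (hfd s hs).continuousWithinAt
    have hgcont : Continuous fun s => V s ξ := continuous_iff_continuousAt.mpr fun s => (hV ξ s).continuousAt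
    have key : f t = V t ξ := by
      rcases le_total t₀ t with hle | hle
      · have heq := ODE_solution_unique_of_mem_Icc_right (v := v)
          (s := fun _ => (univ : Set H)) (fun s _ => hvLip s)
          (hfcont.mono (Icc_subset_Icc ht₀mem.1 htmem.2))
          (fun s hs => ?_) (fun _ _ => mem_univ _)
          (hgcont.continuousOn)
          (fun s hs => ?_) (fun _ _ => mem_univ _) hξ.symm
        · exact heq (right_mem_Icc.mpr hle)
        · -- f derivative within Ici s
          have hsmem : s ∈ Icc tMin tMax := ⟨le_trans ht₀mem.1 hs.1, le_trans hs.2.le htmem.2⟩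
          have hnh : Icc tMin tMax ∈ nhdsWithin s (Ici s) := by
            rw [mem_nhdsWithin]
            exact ⟨Iio tMax, isOpen_Iio, lt_of_lt_of_le hs.2 htmem.2,
              fun x hx => ⟨hsmem.1.trans hx.2, hx.1.le⟩⟩
          rw [hveq s (hsub hsmem)]
          exact (hfd s hsmem).mono_of_mem_nhdsWithin hnh
        · rw [hveq s (hsub ⟨le_trans ht₀mem.1 hs.1, le_trans hs.2.le htmem.2⟩)]
          exact (hV ξ s).hasDerivWithinAt
      · have heq := ODE_solution_unique_of_mem_Icc_left (v := v)
          (s := fun _ => (univ : Set H)) (fun s _ => hvLip s)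
          (hfcont.mono (Icc_subset_Icc htmem.1 ht₀mem.2))
          (fun s hs => ?_) (fun _ _ => mem_univ _)
          (hgcont.continuousOn)
          (fun s hs => ?_) (fun _ _ => mem_univ _) hξ.symm
        · exact heq (left_mem_Icc.mpr hle)
        · have hsmem : s ∈ Icc tMin tMax := ⟨le_trans htmem.1 hs.1.le, le_trans hs.2 ht₀mem.2⟩
          have hnh : Icc tMin tMax ∈ nhdsWithin s (Iic s) := by
            rw [mem_nhdsWithin]
            exact ⟨Ioi tMin, isOpen_Ioi, lt_of_le_of_lt htmem.1 hs.1,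
              fun x hx => ⟨hx.1.le, hx.2.trans hsmem.2⟩⟩
          rw [hveq s (hsub hsmem)]
          exact (hfd s hsmem).mono_of_mem_nhdsWithin hnh
        · rw [hveq s (hsub ⟨le_trans htmem.1 hs.1.le, le_trans hs.2 ht₀mem.2⟩)]
          exact (hV ξ s).hasDerivWithinAt
    exact ⟨ξ, key ▸ hft⟩
  -- induction
  have main : ∀ n : ℕ, ∀ t : ℝ, |t| ≤ T → |t| ≤ n * δ → Function.Surjective (V t) := by
    intro n
    induction n with
    | zero =>
      intro t _ h
      have ht0 : t = 0 := by
        have := abs_nonneg t; have : |t| = 0 := le_antisymm (by simpa using h) (abs_nonneg t)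
        exact abs_eq_zero.mp this
      rw [ht0, hV0]
      exact fun φ => ⟨φ, rfl⟩
    | succ n ih =>
      intro t hTt hn
      have habs := abs_le.mp hTt
      by_cases hc : |t| ≤ n * δ
      · exact ih t hTt hc
      push_neg at hc
      have hn' : |t| ≤ (n + 1) * δ := by push_cast at hn; linarith [hn]
      have hc' : (n:ℝ) * δ < |t| := hc
      rcases le_or_gt 0 t with hpos | hneg
      · rw [abs_of_nonneg hpos] at hn' hc'
        set t₀ : ℝ := max 0 (t - δ) with ht₀def
        have ht₀0 : 0 ≤ t₀ := le_max_left _ _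
        have ht₀n : t₀ ≤ n * δ := max_le (by positivity) (by linarith)
        have ht₀T : t₀ ≤ T := max_le hTpos.le (by linarith)
        have hstep : |t - t₀| ≤ δ := by
          rw [abs_le]
          constructor
          · have : t₀ ≤ t := max_le hpos (by linarith)
            linarith
          · linarith [le_max_right (0:ℝ) (t - δ)]
        exact step t₀ t ⟨by linarith, ht₀T⟩ ⟨habs.1, habs.2⟩ hstep
          (ih t₀ (by rw [abs_of_nonneg ht₀0]; exact ht₀T)
            (by rw [abs_of_nonneg ht₀0]; exact ht₀n))
      · rw [abs_of_neg hneg] at hn' hc'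
        set t₀ : ℝ := min 0 (t + δ) with ht₀def
        have ht₀0 : t₀ ≤ 0 := min_le_left _ _
        have ht₀n : -t₀ ≤ n * δ := by
          have : -((n:ℝ) * δ) ≤ t₀ := le_min (neg_nonpos.mpr (by positivity)) (by linarith)
          linarith
        have ht₀T : -T ≤ t₀ := le_min (by linarith) (by linarith)
        have hstep : |t - t₀| ≤ δ := by
          rw [abs_le]
          constructor
          · linarith [min_le_right (0:ℝ) (t + δ)]
          · have : t ≤ t₀ := le_min hneg.le (by linarith)
            linarith
        exact step t₀ t ⟨ht₀T, by linarith⟩ ⟨habs.1, habs.2⟩ hstep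
          (ih t₀ (by rw [abs_of_nonpos ht₀0]; linarith)
            (by rw [abs_of_nonpos ht₀0]; exact ht₀n))
  obtain ⟨n, hnge⟩ := exists_nat_ge (|tstar| / δ)
  refine main n tstar htstarT ?_
  rw [div_le_iff₀ hδpos] at hnge
  linarith


end stmt9aux

/-- If `A(t) = -iH(t)` is skew-adjoint (i.e. `H(t)` bounded self-adjoint) and strongly
continuous, the strong solution `V` of `V'(t) = A(t)V(t)`, `V(0) = 1`, is unitary, and
`U(t,s) := V(t)V(s)⁻¹ = V(t)V(s)*` is a unitary cocycle satisfying the propagator equation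
`d/dt U(t,s)ψ = A(t)U(t,s)ψ = -iH(t)U(t,s)ψ`. -/
theorem stmt_9 {H : Type*} [NormedAddCommGroup H] [InnerProductSpace ℂ H] [CompleteSpace H]
    (A : ℝ → H →L[ℂ] H) (hA : ∀ ψ : H, Continuous fun t => A t ψ)
    (hskew : ∀ t : ℝ, ContinuousLinearMap.adjoint (A t) = -(A t))
    (V : ℝ → H →L[ℂ] H) (hV0 : V 0 = 1)
    (hV : ∀ (ψ : H) (t : ℝ), HasDerivAt (fun s => V s ψ) (A t (V t ψ)) t) :
    (∀ t : ℝ, ContinuousLinearMap.adjoint (V t) * V t = 1 ∧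
        V t * ContinuousLinearMap.adjoint (V t) = 1) ∧
    (∀ t s r : ℝ,
        (V t * ContinuousLinearMap.adjoint (V s)) * (V s * ContinuousLinearMap.adjoint (V r))
          = V t * ContinuousLinearMap.adjoint (V r)) ∧
    (∀ (s : ℝ) (ψ : H) (t : ℝ),
        HasDerivAt (fun τ => (V τ * ContinuousLinearMap.adjoint (V s)) ψ)
          (A t ((V t * ContinuousLinearMap.adjoint (V s)) ψ)) t) := by
  have hiso := stmt9_isom A hskew V hV0 hV
  have hsurj := stmt9_surj A hA V hV0 hV
  have hright : ∀ t : ℝ, V t * ContinuousLinearMap.adjoint (V t) = 1 := by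
    intro t
    ext φ
    obtain ⟨ψ, hψ⟩ := hsurj t φ
    have h1 : ContinuousLinearMap.adjoint (V t) (V t ψ) = ψ := by
      have := congrArg (fun (B : H →L[ℂ] H) => B ψ) (hiso t)
      simpa using this
    simp only [ContinuousLinearMap.mul_apply, ContinuousLinearMap.one_apply, ← hψ, h1]
  refine ⟨fun t => ⟨hiso t, hright t⟩, fun t s r => ?_, fun s ψ t => ?_⟩
  · calc (V t * ContinuousLinearMap.adjoint (V s)) * (V s * ContinuousLinearMap.adjoint (V r))
        = V t * (ContinuousLinearMap.adjoint (V s) * V s) * ContinuousLinearMap.adjoint (V r) := by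
          rw [mul_assoc, mul_assoc, mul_assoc]
      _ = V t * ContinuousLinearMap.adjoint (V r) := by rw [hiso s, mul_one]
  · simp only [ContinuousLinearMap.mul_apply]
    exact hV (ContinuousLinearMap.adjoint (V s) ψ) t
end

section
/- Let H be a complex Hilbert space, A : ℝ → B(H) strongly continuous self-adjoint, and let g₀ ∈ B(H). Then g(t) = U(t,t₀) g₀ U(t,t₀)* is the unique strong solution of g'(t) = i[A(t), g(t)], g(t₀) = g₀, where U(t,t₀) is the unitary propagator solving i d/dt U(t,t₀)ψ = −A(t)U(t,t₀)ψ, U(t₀,t₀) = 1. In particular ‖g(t)‖ = ‖g₀‖ for all t. -/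
open ContinuousLinearMap Asymptotics Filter Topology

lemma iso_of {H : Type*} [NormedAddCommGroup H] [InnerProductSpace ℂ H] [CompleteSpace H]
    (V : H →L[ℂ] H) (h : ContinuousLinearMap.adjoint V * V = 1) (x : H) : ‖V x‖ = ‖x‖ := by
  have h1 : (inner ℂ (V x) (V x) : ℂ) = inner ℂ x x := by
    rw [← ContinuousLinearMap.adjoint_inner_right]
    have : ContinuousLinearMap.adjoint V (V x) = (ContinuousLinearMap.adjoint V * V) x := rfl
    rw [this, h, ContinuousLinearMap.one_apply]
  rw [inner_self_eq_norm_sq_to_K, inner_self_eq_norm_sq_to_K] at h1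
  have h2 : ‖V x‖ ^ 2 = ‖x‖ ^ 2 := by exact_mod_cast h1
  nlinarith [norm_nonneg (V x), norm_nonneg x]

lemma smul_littleo {H : Type*} [NormedAddCommGroup H] [NormedSpace ℂ H]
    {v : ℝ → H} {t : ℝ} (hv : Tendsto v (𝓝 t) (𝓝 0)) :
    (fun s => (s - t) • v s) =o[𝓝 t] fun s => s - t := by
  rw [isLittleO_iff]
  intro c hc
  filter_upwards [hv.eventually (Metric.ball_mem_nhds 0 hc)] with s hs
  rw [norm_smul, Real.norm_eq_abs, mul_comm]
  have : ‖v s‖ ≤ c := le_of_lt (by simpa [dist_eq_norm] using hs)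
  calc ‖v s‖ * |s - t| ≤ c * |s - t| := by
        exact mul_le_mul_of_nonneg_right this (abs_nonneg _)
    _ = c * ‖s - t‖ := by rw [Real.norm_eq_abs]

lemma deriv_apply_family {H : Type*} [NormedAddCommGroup H] [NormedSpace ℂ H]
    {B : ℝ → H →L[ℂ] H} {D : H → H} {t : ℝ} {C : ℝ}
    (hC : ∀ᶠ s in 𝓝 t, ‖B s‖ ≤ C)
    (hB : ∀ φ : H, HasDerivAt (fun s => B s φ) (D φ) t)
    {f : ℝ → H} {f' : H} (hf : HasDerivAt f f' t) :
    HasDerivAt (fun s => B s (f s)) (D (f t) + B t f') t := by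
  rw [hasDerivAt_iff_isLittleO] at hf ⊢
  have h3 := hasDerivAt_iff_isLittleO.1 (hB (f t))
  have h2 : (fun s => (s - t) • (B s f' - B t f')) =o[𝓝 t] fun s => s - t := by
    apply smul_littleo
    have := ((hB f').continuousAt : ContinuousAt (fun s => B s f') t)
    simpa using this.tendsto.sub_const (B t f')
  have h1 : (fun s => B s (f s - f t - (s - t) • f')) =o[𝓝 t] fun s => s - t := by
    refine IsBigO.trans_isLittleO ?_ hf
    rw [isBigO_iff]
    refine ⟨C, ?_⟩
    filter_upwards [hC] with s hs
    exact le_trans ((B s).le_opNorm _) (mul_le_mul_of_nonneg_right hs (norm_nonneg _))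
  have := (h1.add h2).add h3
  refine this.congr_left fun s => ?_
  simp only [map_sub, map_smul, ContinuousLinearMap.map_smul_of_tower, smul_sub, smul_add]
  abel

lemma adj_deriv {H : Type*} [NormedAddCommGroup H] [InnerProductSpace ℂ H] [CompleteSpace H]
    {A U : ℝ → H →L[ℂ] H}
    (hUuni : ∀ t : ℝ, ContinuousLinearMap.adjoint (U t) * U t = 1 ∧
        U t * ContinuousLinearMap.adjoint (U t) = 1)
    (hUode : ∀ (ψ : H) (t : ℝ), HasDerivAt (fun s => U s ψ) (Complex.I • (A t (U t ψ))) t)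
    (ψ : H) (t : ℝ) :
    HasDerivAt (fun s => ContinuousLinearMap.adjoint (U s) ψ)
      (-(Complex.I • (ContinuousLinearMap.adjoint (U t) (A t ψ)))) t := by
  set c := -(Complex.I • (ContinuousLinearMap.adjoint (U t) (A t ψ))) with hc
  have hUUadj : ∀ s (x : H), U s (ContinuousLinearMap.adjoint (U s) x) = x := by
    intro s x
    rw [← ContinuousLinearMap.mul_apply, (hUuni s).2, ContinuousLinearMap.one_apply]
  have hiso : ∀ (s : ℝ) (x : H), ‖U s x‖ = ‖x‖ := fun s x => iso_of _ (hUuni s).1 x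
  rw [hasDerivAt_iff_isLittleO]
  have hE : (fun s => U s (ContinuousLinearMap.adjoint (U t) ψ) - ψ
      - (s - t) • (Complex.I • A t ψ)) =o[𝓝 t] fun s => s - t := by
    have h := hasDerivAt_iff_isLittleO.1 (hUode (ContinuousLinearMap.adjoint (U t) ψ) t)
    simpa [hUUadj t ψ] using h
  have hcont : Tendsto (fun s => U s c - U t c) (𝓝 t) (𝓝 0) := by
    simpa using ((hUode c t).continuousAt.tendsto).sub_const (U t c)
  have hG : (fun s => (s - t) • (U s c - U t c)) =o[𝓝 t] fun s => s - t := smul_littleo hcont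
  have hUtc : U t c = -(Complex.I • A t ψ) := by
    rw [hc]
    simp only [map_neg, ContinuousLinearMap.map_smul, hUUadj t (A t ψ)]
  have hsum := hE.neg_left.sub hG
  rw [← isLittleO_norm_left] at hsum ⊢
  refine hsum.congr_left fun s => ?_
  rw [← hiso s (ContinuousLinearMap.adjoint (U s) ψ - ContinuousLinearMap.adjoint (U t) ψ
    - (s - t) • c)]
  congr 1
  simp only [map_sub, ContinuousLinearMap.map_smul_of_tower, hUUadj, hUtc, smul_sub, smul_neg,
    neg_sub, sub_neg_eq_add, smul_add]
  abel

/-- For strongly continuous self-adjoint `A` with unitary propagator `U` (solving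
`i d/dt U(t)ψ = -A(t)U(t)ψ`, `U(t₀) = 1`), the family `g(t) = U(t) g₀ U(t)*` is the unique
strong solution of `g'(t) = i[A(t), g(t)]`, `g(t₀) = g₀`, and `‖g(t)‖ = ‖g₀‖` for all `t`. -/
theorem stmt_11 {H : Type*} [NormedAddCommGroup H] [InnerProductSpace ℂ H] [CompleteSpace H]
    (A : ℝ → H →L[ℂ] H) (hA : ∀ ψ : H, Continuous fun t => A t ψ)
    (hAsa : ∀ t : ℝ, ContinuousLinearMap.adjoint (A t) = A t)
    (t₀ : ℝ) (g₀ : H →L[ℂ] H)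
    (U : ℝ → H →L[ℂ] H) (hU0 : U t₀ = 1)
    (hUuni : ∀ t : ℝ, ContinuousLinearMap.adjoint (U t) * U t = 1 ∧
        U t * ContinuousLinearMap.adjoint (U t) = 1)
    (hUode : ∀ (ψ : H) (t : ℝ),
        HasDerivAt (fun s => U s ψ) (Complex.I • (A t (U t ψ))) t) :
    (U t₀ * g₀ * ContinuousLinearMap.adjoint (U t₀) = g₀) ∧
    (∀ (ψ : H) (t : ℝ),
        HasDerivAt (fun s => (U s * g₀ * ContinuousLinearMap.adjoint (U s)) ψ)
          (Complex.I • ((A t * (U t * g₀ * ContinuousLinearMap.adjoint (U t))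
            - (U t * g₀ * ContinuousLinearMap.adjoint (U t)) * A t) ψ)) t) ∧
    (∀ g : ℝ → H →L[ℂ] H,
      (g t₀ = g₀ ∧ ∀ (ψ : H) (t : ℝ), HasDerivAt (fun s => g s ψ)
          (Complex.I • ((A t * g t - g t * A t) ψ)) t) →
      ∀ t : ℝ, g t = U t * g₀ * ContinuousLinearMap.adjoint (U t)) ∧
    ∀ t : ℝ, ‖U t * g₀ * ContinuousLinearMap.adjoint (U t)‖ = ‖g₀‖ := by
  have hadj1 : ContinuousLinearMap.adjoint (1 : H →L[ℂ] H) = 1 := by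
    rw [ContinuousLinearMap.one_def, ContinuousLinearMap.adjoint_id]
  have hiso : ∀ (s : ℝ) (x : H), ‖U s x‖ = ‖x‖ := fun s x => iso_of _ (hUuni s).1 x
  have hisoA : ∀ (s : ℝ) (x : H), ‖ContinuousLinearMap.adjoint (U s) x‖ = ‖x‖ := fun s x =>
    iso_of _ (by rw [ContinuousLinearMap.adjoint_adjoint]; exact (hUuni s).2) x
  have hUnorm : ∀ s : ℝ, ‖U s‖ ≤ 1 := fun s =>
    ContinuousLinearMap.opNorm_le_bound _ zero_le_one (by simp [hiso])
  have hAdjnorm : ∀ s : ℝ, ‖ContinuousLinearMap.adjoint (U s)‖ ≤ 1 := fun s =>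
    ContinuousLinearMap.opNorm_le_bound _ zero_le_one (by simp [hisoA])
  have hUUadj : ∀ (s : ℝ) (x : H), U s (ContinuousLinearMap.adjoint (U s) x) = x := by
    intro s x
    rw [← ContinuousLinearMap.mul_apply, (hUuni s).2, ContinuousLinearMap.one_apply]
  have hadjUU : ∀ (s : ℝ) (x : H), ContinuousLinearMap.adjoint (U s) (U s x) = x := by
    intro s x
    rw [← ContinuousLinearMap.mul_apply, (hUuni s).1, ContinuousLinearMap.one_apply]
  have hadj := adj_deriv hUuni hUode
  refine ⟨by rw [hU0, hadj1]; simp, ?_, ?_, ?_⟩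
  · -- part 2
    intro ψ t
    have hf : HasDerivAt (fun s => g₀ (ContinuousLinearMap.adjoint (U s) ψ))
        (g₀ (-(Complex.I • (ContinuousLinearMap.adjoint (U t) (A t ψ))))) t :=
      (g₀.restrictScalars ℝ).hasFDerivAt.comp_hasDerivAt t (hadj ψ t)
    have key := deriv_apply_family (C := 1) (Filter.Eventually.of_forall hUnorm)
      (fun φ => hUode φ t) hf
    convert key using 1
    · rfl
    simp only [ContinuousLinearMap.mul_apply, ContinuousLinearMap.sub_apply, smul_sub,
      map_neg, map_smul, smul_neg]
    abel
  · -- part 3: uniqueness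
    rintro g ⟨hg0, hgode⟩ t
    have hgcont : ∀ ψ : H, Continuous fun s => g s ψ := fun ψ =>
      continuous_iff_continuousAt.2 fun s => (hgode ψ s).continuousAt
    have hbd : ∀ τ : ℝ, ∃ C, ∀ᶠ s in 𝓝 τ, ‖g s‖ ≤ C := by
      intro τ
      have hK : Set.Icc (τ - 1) (τ + 1) ∈ 𝓝 τ := Icc_mem_nhds (by linarith) (by linarith)
      have hb : ∀ x : H, ∃ C, ∀ i : Set.Icc (τ - 1) (τ + 1), ‖g i x‖ ≤ C := by
        intro x
        obtain ⟨C, hC⟩ := isCompact_Icc.exists_bound_of_continuousOn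
          ((hgcont x).continuousOn (s := Set.Icc (τ - 1) (τ + 1)))
        exact ⟨C, fun i => hC i i.2⟩
      obtain ⟨C, hC⟩ := banach_steinhaus hb
      exact ⟨C, Filter.eventually_of_mem hK fun s hs => hC ⟨s, hs⟩⟩
    have key : ∀ (ψ : H) (τ : ℝ),
        HasDerivAt (fun s => ContinuousLinearMap.adjoint (U s) (g s (U s ψ))) 0 τ := by
      intro ψ τ
      obtain ⟨C, hC⟩ := hbd τ
      have hk : HasDerivAt (fun s => g s (U s ψ)) (Complex.I • (A τ (g τ (U τ ψ)))) τ := by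
        have h := deriv_apply_family hC (fun φ => hgode φ τ) (hUode ψ τ)
        convert h using 1
        simp only [ContinuousLinearMap.mul_apply, ContinuousLinearMap.sub_apply, smul_sub,
          map_smul]
        abel
      have h := deriv_apply_family (C := 1) (Filter.Eventually.of_forall hAdjnorm)
        (fun φ => hadj φ τ) hk
      convert h using 1
      simp [map_smul]
    have hconst : ∀ (ψ : H),
        ContinuousLinearMap.adjoint (U t) (g t (U t ψ)) = g₀ ψ := by
      intro ψ
      have hdiff : Differentiable ℝ fun s => ContinuousLinearMap.adjoint (U s) (g s (U s ψ)) :=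
        fun s => (key ψ s).differentiableAt
      have hzero : ∀ s : ℝ, deriv (fun s => ContinuousLinearMap.adjoint (U s) (g s (U s ψ))) s
          = 0 := fun s => (key ψ s).deriv
      have := is_const_of_deriv_eq_zero hdiff hzero t t₀
      rw [hU0, hadj1] at this
      simpa [hg0] using this
    ext φ
    have h1 := hconst (ContinuousLinearMap.adjoint (U t) φ)
    rw [hUUadj t φ] at h1
    have h2 := congrArg (U t) h1
    rw [hUUadj t (g t φ)] at h2
    simpa [ContinuousLinearMap.mul_apply] using h2
  · -- part 4: norm
    intro t
    refine le_antisymm ?_ ?_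
    · refine ContinuousLinearMap.opNorm_le_bound _ (norm_nonneg g₀) fun φ => ?_
      calc ‖(U t * g₀ * ContinuousLinearMap.adjoint (U t)) φ‖
          = ‖g₀ (ContinuousLinearMap.adjoint (U t) φ)‖ := by
            simp only [ContinuousLinearMap.mul_apply, hiso]
        _ ≤ ‖g₀‖ * ‖ContinuousLinearMap.adjoint (U t) φ‖ := g₀.le_opNorm _
        _ = ‖g₀‖ * ‖φ‖ := by rw [hisoA]
    · refine ContinuousLinearMap.opNorm_le_bound _ (norm_nonneg _) fun φ => ?_
      calc ‖g₀ φ‖ = ‖U t (g₀ (ContinuousLinearMap.adjoint (U t) (U t φ)))‖ := by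
            rw [hadjUU t φ, hiso]
        _ = ‖(U t * g₀ * ContinuousLinearMap.adjoint (U t)) (U t φ)‖ := by
            simp only [ContinuousLinearMap.mul_apply]
        _ ≤ ‖U t * g₀ * ContinuousLinearMap.adjoint (U t)‖ * ‖U t φ‖ :=
            ContinuousLinearMap.le_opNorm _ _
        _ = ‖U t * g₀ * ContinuousLinearMap.adjoint (U t)‖ * ‖φ‖ := by rw [hiso]
end

section
/- Let (Γ, d) be a countable metric space and F : [0,∞) → (0,∞) non-increasing with ‖F‖ := sup_{x∈Γ} ∑_{y∈Γ} F(d(x,y)) < ∞ and convolution constant C := sup_{x,y∈Γ} ∑_{z∈Γ} F(d(x,z))F(d(z,y))/F(d(x,y)) < ∞. Let Φ be an interaction with ‖Φ‖ := sup_{x,y} F(d(x,y))⁻¹ ∑_{X ∋ x,y} ‖Φ(X)‖ < ∞, and let X₀ ⊂ Γ be finite. Define a₁ = ∑_{Z ∈ S(X₀)} ‖Φ(Z)‖ δ_Y(Z) and recursively a_n = ∑_{Z₁ ∈ S(X₀)} ∑_{Z₂ ∈ S(Z₁)} ⋯ ∑_{Z_n ∈ S(Z_{n−1})} δ_Y(Z_n)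 ∏_{j=1}^n ‖Φ(Z_j)‖, where S(W) = {Z ⊂ Γ : Z ∩ W ≠ ∅ and Z ∩ (Γ∖W) ≠ ∅} and δ_Y(Z) = 1 if Z ∩ Y ≠ ∅, else 0, with Y ⊂ Γ finite disjoint from X₀. Then for all n ≥ 1, a_n ≤ ‖Φ‖ⁿ C^{n−1} ∑_{y∈Y} ∑_{x ∈ X₀} F(d(x,y)). -/
open scoped ENNReal


/-- Sum over functions of a product of single-coordinate factors equals product of sums. -/
lemma LR_tsum_pi_prod {α : Type*} : ∀ (m : ℕ) (h : Fin m → α → ℝ≥0∞),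
    ∑' f : Fin m → α, ∏ i, h i (f i) = ∏ i, ∑' t, h i t := by
  intro m
  induction m with
  | zero =>
    intro h
    simp only [Finset.univ_eq_empty, Finset.prod_empty]
    exact tsum_eq_single (fun i => i.elim0) (fun b hb => absurd (Subsingleton.elim _ _) hb)
  | succ m ih =>
    intro h
    rw [← Equiv.tsum_eq (Fin.consEquiv (fun _ : Fin (m + 1) => α))
      (fun f => ∏ i, h i (f i))]
    have hpt : ∀ p : α × (Fin m → α),
        (∏ i, h i ((Fin.consEquiv (fun _ : Fin (m + 1) => α)) p i))
          = h 0 p.1 * ∏ i : Fin m, h i.succ (p.2 i) := by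
      intro p
      simp [Fin.prod_univ_succ]
    rw [tsum_congr hpt,
      show (∑' p : α × (Fin m → α), h 0 p.1 * ∏ i : Fin m, h i.succ (p.2 i))
        = ∑' (a : α) (b : Fin m → α), h 0 a * ∏ i : Fin m, h i.succ (b i) from
        ENNReal.tsum_prod (f := fun (a : α) (b : Fin m → α) => h 0 a * ∏ i : Fin m, h i.succ (b i))]
    have : ∀ a : α, ∑' b : Fin m → α, h 0 a * ∏ i : Fin m, h i.succ (b i)
        = h 0 a * ∑' b : Fin m → α, ∏ i : Fin m, h i.succ (b i) := by
      intro a; rw [ENNReal.tsum_mul_left]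
    rw [tsum_congr this, ENNReal.tsum_mul_right, ih (fun i => h i.succ),
      Fin.prod_univ_succ]

/-- A sum of finite values supported on subsets of a finite set is finite. -/
lemma LR_tsum_subsets_ne_top {γ : Type*} [DecidableEq γ] (φ : Finset γ → ℝ≥0∞)
    (hφ : ∀ Z, φ Z ≠ ⊤) (W : Finset γ) (hsupp : ∀ Z, φ Z ≠ 0 → Z ⊆ W) :
    ∑' Z, φ Z ≠ ⊤ := by
  have h1 : ∑' Z, φ Z = ∑ Z ∈ W.powerset, φ Z := by
    apply tsum_eq_sum
    intro Z hZ
    by_contra hne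
    exact hZ (Finset.mem_powerset.2 (hsupp Z hne))
  rw [h1]
  exact (ENNReal.sum_lt_top.2 fun Z _ => (hφ Z).lt_top).ne


section
variable {Γ : Type*} [DecidableEq Γ]

def LRch (X₀ Y : Finset Γ) (n : ℕ) (c : Fin (n + 1) → Finset Γ) : Prop :=
  ((c 0 ∩ X₀).Nonempty ∧ ¬ c 0 ⊆ X₀)
    ∧ (∀ i : Fin n, (c i.succ ∩ c i.castSucc).Nonempty ∧ ¬ c i.succ ⊆ c i.castSucc)
    ∧ (c (Fin.last n) ∩ Y).Nonempty

instance (X₀ Y : Finset Γ) (n : ℕ) :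
    DecidablePred (LRch X₀ Y n) := fun c => by unfold LRch; infer_instance

lemma LR_split {ι : Type*} (q q₁ q₂ : ι → ℝ≥0∞) (hle : ∀ Z, q Z ≤ q₁ Z + q₂ Z)
    (htop : ∑' Z, q Z = ⊤) (h2 : ∑' Z, q₂ Z ≠ ⊤) : ∑' Z, q₁ Z = ⊤ := by
  by_contra h1
  have h : (∑' Z, q Z) ≤ ∑' Z, q₁ Z + ∑' Z, q₂ Z := by
    rw [← ENNReal.tsum_add]; exact ENNReal.tsum_le_tsum hle
  rw [htop] at h
  exact ENNReal.add_ne_top.2 ⟨h1, h2⟩ (top_le_iff.1 h)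

lemma LR_replace (g : Finset Γ → ℝ≥0∞)
    (X₀ Y : Finset Γ) (n : ℕ) (c : Fin (n + 1) → Finset Γ) (idx : Fin (n + 1))
    (q : Finset Γ → ℝ≥0∞) (hqg : ∀ Z, q Z ≤ g Z)
    (hvalid : ∀ Z, q Z ≠ 0 → LRch X₀ Y n (Function.update c idx Z))
    (hpos : ∀ j, j ≠ idx → g (c j) ≠ 0)
    (hheavy : ∑' Z, q Z = ⊤) :
    (∑' c' : Fin (n + 1) → Finset Γ, if LRch X₀ Y n c' then ∏ j, g (c' j) else 0) = ⊤ := by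
  classical
  set K := ∏ j ∈ Finset.univ \ {idx}, g (c j) with hK
  have hKne : K ≠ 0 := by
    rw [hK, Finset.prod_ne_zero_iff]
    intro j hj
    exact hpos j ((Finset.mem_sdiff.1 hj).2 ∘ Finset.mem_singleton.2)
  have hprod : ∀ Z, (∏ j, g (Function.update c idx Z j)) = g Z * K := by
    intro Z
    have hfun : (fun j => g (Function.update c idx Z j))
        = Function.update (fun j => g (c j)) idx (g Z) := by
      funext j
      rcases eq_or_ne j idx with h | h
      · subst h; simp
      · simp [Function.update_of_ne h]
    calc (∏ j, g (Function.update c idx Z j))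
        = ∏ j, Function.update (fun j => g (c j)) idx (g Z) j := by rw [hfun]
      _ = g Z * K := Finset.prod_update_of_mem (Finset.mem_univ idx) _ _
  have hinj : Function.Injective (fun Z : Finset Γ => Function.update c idx Z) := by
    intro Z₁ Z₂ h
    have h2 := congrFun h idx
    simpa using h2
  have h1 : ∑' Z : Finset Γ, q Z * K
      ≤ ∑' c' : Fin (n + 1) → Finset Γ, if LRch X₀ Y n c' then ∏ j, g (c' j) else 0 := by
    calc ∑' Z : Finset Γ, q Z * K
        ≤ ∑' Z : Finset Γ,
            (if LRch X₀ Y n (Function.update c idx Z) then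
              ∏ j, g (Function.update c idx Z j) else 0) := by
          apply ENNReal.tsum_le_tsum
          intro Z
          rcases eq_or_ne (q Z) 0 with h | h
          · simp [h]
          · rw [if_pos (hvalid Z h), hprod Z]
            exact mul_le_mul_left (hqg Z) K
      _ ≤ _ := ENNReal.tsum_comp_le_tsum_of_injective hinj _
  rw [ENNReal.tsum_mul_right, hheavy, ENNReal.top_mul hKne] at h1
  exact top_le_iff.1 h1



lemma LR_core (g : Finset Γ → ℝ≥0∞) (hg : ∀ Z, g Z ≠ ⊤)
    (X₀ Y : Finset Γ) (n : ℕ) :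
    ∀ (k i : ℕ) (hin : i ≤ n) (_ : n - i = k) (c : Fin (n + 1) → Finset Γ) (u v : Γ)
      (q : Finset Γ → ℝ≥0∞),
      (∀ Z, q Z ≤ g Z) →
      (∀ Z, q Z ≠ 0 → u ∈ Z ∧ v ∈ Z) →
      (i = 0 → u ∈ X₀) →
      (∀ _ : 0 < i, u ∈ c ⟨i - 1, by omega⟩) →
      (i = n → v ∈ Y) →
      (∀ _ : i < n, v ∈ c ⟨i + 1, by omega⟩) →
      (i ≠ 0 → ((c 0 ∩ X₀).Nonempty ∧ ¬ c 0 ⊆ X₀)) →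
      (∀ j : Fin n, (j : ℕ) + 1 ≠ i → (j : ℕ) ≠ i →
        ((c j.succ ∩ c j.castSucc).Nonempty ∧ ¬ c j.succ ⊆ c j.castSucc)) →
      (i ≠ n → (c (Fin.last n) ∩ Y).Nonempty) →
      (∀ j : Fin (n + 1), (j : ℕ) ≠ i → g (c j) ≠ 0) →
      (∑' Z, q Z) = ⊤ →
      (∑' c' : Fin (n + 1) → Finset Γ, if LRch X₀ Y n c' then ∏ j, g (c' j) else 0) = ⊤ := by
  intro k
  induction k with
  | zero =>
    intro i hin hk c u v q hqg hq hu0 hui hvY hvc hstart hlink hend hpos hheavy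
    have hi : i = n := by omega
    have hprev : i - 1 < n + 1 := by omega
    set prev : Finset Γ := if i = 0 then X₀ else c ⟨i - 1, hprev⟩ with hprevdef
    have huprev : u ∈ prev := by
      rcases Nat.eq_zero_or_pos i with h | h
      · rw [hprevdef, if_pos h]; exact hu0 h
      · rw [hprevdef, if_neg (by omega)]; exact hui h
    have hq1 : ∑' Z, (if ¬ Z ⊆ prev then q Z else 0) = ⊤ := by
      apply LR_split q _ (fun Z => if Z ⊆ prev then q Z else 0) ?_ hheavy ?_
      · intro Z; by_cases h : Z ⊆ prev <;> simp [h]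
      · apply LR_tsum_subsets_ne_top _ ?_ prev ?_
        · intro Z; split
          · exact ((hqg Z).trans_lt (hg Z).lt_top).ne
          · exact ENNReal.zero_ne_top
        · intro Z hZ
          by_contra h
          rw [if_neg h] at hZ; exact hZ rfl
    apply LR_replace g X₀ Y n c (Fin.last n) _ ?_ ?_ ?_ hq1
    · intro Z; split
      · exact hqg Z
      · exact zero_le
    · intro Z hZ
      have hns : ¬ Z ⊆ prev := by
        by_contra h; rw [if_neg (by simpa using h)] at hZ; exact hZ rfl
      rw [if_pos hns] at hZ
      obtain ⟨huZ, hvZ⟩ := hq Z hZ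
      refine ⟨?_, ?_, ?_⟩
      · rcases Nat.eq_zero_or_pos n with h0 | h0
        · have e0 : (0 : Fin (n + 1)) = Fin.last n := by
            apply Fin.ext; simp only [Fin.val_zero, Fin.val_last]; omega
          rw [e0, Function.update_self]
          refine ⟨⟨u, Finset.mem_inter.2 ⟨huZ, hu0 (by omega)⟩⟩, ?_⟩
          rw [hprevdef, if_pos (by omega)] at hns; exact hns
        · have e0 : (0 : Fin (n + 1)) ≠ Fin.last n := by
            intro h; have h2 := congrArg Fin.val h
            simp only [Fin.val_zero, Fin.val_last] at h2; omega
          rw [Function.update_of_ne e0]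
          exact hstart (by omega)
      · intro j
        have hjlt := j.isLt
        rcases eq_or_ne ((j : ℕ) + 1) n with hj | hj
        · have ejs : j.succ = Fin.last n := by
            apply Fin.ext; simp only [Fin.val_succ, Fin.val_last]; omega
          have ejc : j.castSucc ≠ Fin.last n := by
            intro h; have h2 := congrArg Fin.val h
            simp only [Fin.coe_castSucc, Fin.val_last] at h2; omega
          rw [ejs, Function.update_self, Function.update_of_ne ejc]
          have ecp : c j.castSucc = prev := by
            rw [hprevdef, if_neg (by omega)]
            congr 1
            apply Fin.ext; simp only [Fin.coe_castSucc]; omega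
          rw [ecp]
          exact ⟨⟨u, Finset.mem_inter.2 ⟨huZ, huprev⟩⟩, hns⟩
        · have ejs : j.succ ≠ Fin.last n := by
            intro h; have h2 := congrArg Fin.val h
            simp only [Fin.val_succ, Fin.val_last] at h2; omega
          have ejc : j.castSucc ≠ Fin.last n := by
            intro h; have h2 := congrArg Fin.val h
            simp only [Fin.coe_castSucc, Fin.val_last] at h2; omega
          rw [Function.update_of_ne ejs, Function.update_of_ne ejc]
          exact hlink j (by omega) (by omega)
      · rw [Function.update_self]
        exact ⟨v, Finset.mem_inter.2 ⟨hvZ, hvY hi⟩⟩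
    · intro j hj
      apply hpos
      intro hv'
      exact hj (Fin.ext (by simp only [Fin.val_last]; omega))
  | succ k ih =>
    intro i hin hk c u v q hqg hq hu0 hui hvY hvc hstart hlink hend hpos hheavy
    have hilt : i < n := by omega
    have hprev : i - 1 < n + 1 := by omega
    set prev : Finset Γ := if i = 0 then X₀ else c ⟨i - 1, hprev⟩ with hprevdef
    have huprev : u ∈ prev := by
      rcases Nat.eq_zero_or_pos i with h | h
      · rw [hprevdef, if_pos h]; exact hu0 h
      · rw [hprevdef, if_neg (by omega)]; exact hui h
    have hidxlt : i < n + 1 := by omega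
    set idx : Fin (n + 1) := ⟨i, hidxlt⟩ with hidxdef
    have hnextlt : i + 1 < n + 1 := by omega
    set cnext : Finset Γ := c ⟨i + 1, hnextlt⟩ with hcnextdef
    have hvnext : v ∈ cnext := hvc hilt
    by_cases h2top : ∑' Z, (if cnext ⊆ Z then q Z else 0) = ⊤
    · -- absorption case
      have hq2 : ∑' Z, (if cnext ⊆ Z ∧ ¬ Z ⊆ prev then q Z else 0) = ⊤ := by
        apply LR_split (fun Z => if cnext ⊆ Z then q Z else 0) _
          (fun Z => if cnext ⊆ Z ∧ Z ⊆ prev then q Z else 0) ?_ h2top ?_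
        · intro Z
          by_cases h1 : cnext ⊆ Z <;> by_cases h2 : Z ⊆ prev <;> simp [h1, h2]
        · apply LR_tsum_subsets_ne_top _ ?_ prev ?_
          · intro Z; split
            · exact ((hqg Z).trans_lt (hg Z).lt_top).ne
            · exact ENNReal.zero_ne_top
          · intro Z hZ
            by_contra h
            rw [if_neg (fun hc => h hc.2)] at hZ; exact hZ rfl
      have hex : ∃ Zs, (if cnext ⊆ Zs ∧ ¬ Zs ⊆ prev then q Zs else 0) ≠ 0 := by
        by_contra hall
        push_neg at hall
        rw [tsum_congr fun Z => hall Z] at hq2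
        simp at hq2
      obtain ⟨Zs, hZs⟩ := hex
      have hcondZs : cnext ⊆ Zs ∧ ¬ Zs ⊆ prev := by
        by_contra h; rw [if_neg h] at hZs; exact hZs rfl
      have hqZs : q Zs ≠ 0 := by rw [if_pos hcondZs] at hZs; exact hZs
      have hgZs : g Zs ≠ 0 := by
        intro h
        exact hqZs (le_antisymm (h ▸ hqg Zs) (zero_le))
      obtain ⟨huZs, hvZs⟩ := hq Zs hqZs
      have hi2lt : i + 2 < n + 1 ∨ i + 1 = n := by omega
      obtain ⟨v', hv'c, hv'Y, hv'2⟩ :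
          ∃ v', v' ∈ cnext ∧ (i + 1 = n → v' ∈ Y) ∧
            (∀ h : i + 1 < n, v' ∈ c ⟨i + 2, by omega⟩) := by
        by_cases hi1 : i + 1 = n
        · obtain ⟨v', hv'⟩ := hend (by omega)
          rw [Finset.mem_inter] at hv'
          refine ⟨v', ?_, fun _ => hv'.2, fun h => absurd hi1 (Nat.ne_of_lt h)⟩
          have e : Fin.last n = (⟨i + 1, hnextlt⟩ : Fin (n + 1)) := by
            apply Fin.ext; simp only [Fin.val_last]; omega
          rw [hcnextdef, ← e]; exact hv'.1
        · have hlt : i + 1 < n := by omega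
          obtain ⟨v', hv'⟩ := (hlink ⟨i + 1, hlt⟩ (by omega : i + 1 + 1 ≠ i) (by omega : i + 1 ≠ i)).1
          rw [Finset.mem_inter] at hv'
          refine ⟨v', ?_, fun h => absurd h hi1, fun h => ?_⟩
          · have e : (⟨i + 1, hlt⟩ : Fin n).castSucc = (⟨i + 1, hnextlt⟩ : Fin (n + 1)) := by
              apply Fin.ext; simp only [Fin.coe_castSucc]
            rw [hcnextdef, ← e]; exact hv'.2
          · have e : (⟨i + 1, hlt⟩ : Fin n).succ = (⟨i + 2, by omega⟩ : Fin (n + 1)) := by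
              apply Fin.ext; simp only [Fin.val_succ]
            rw [← e]; exact hv'.1
      set cs := Function.update c idx Zs with hcsdef
      refine ih (i + 1) (by omega) (by omega) cs u v'
        (fun Z => if ¬ Z ⊆ Zs then (if cnext ⊆ Z ∧ ¬ Z ⊆ prev then q Z else 0) else 0)
        ?_ ?_ ?_ ?_ ?_ ?_ ?_ ?_ ?_ ?_ ?_
      · intro Z; split
        · split
          · exact hqg Z
          · exact zero_le
        · exact zero_le
      · intro Z hZ
        have hns : ¬ Z ⊆ Zs := by
          by_contra h; rw [if_neg (by simpa using h)] at hZ; exact hZ rfl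
        rw [if_pos hns] at hZ
        have hcond : cnext ⊆ Z ∧ ¬ Z ⊆ prev := by
          by_contra h; rw [if_neg h] at hZ; exact hZ rfl
        rw [if_pos hcond] at hZ
        exact ⟨(hq Z hZ).1, hcond.1 hv'c⟩
      · intro h; omega
      · intro _
        have e : (⟨i + 1 - 1, by omega⟩ : Fin (n + 1)) = idx := by
          apply Fin.ext; simp only [hidxdef]; omega
        rw [e, hcsdef, Function.update_self]; exact huZs
      · exact hv'Y
      · intro h
        have e : (⟨i + 1 + 1, by omega⟩ : Fin (n + 1)) ≠ idx := by
          intro he; have h2 := congrArg Fin.val he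
          simp only [hidxdef] at h2; omega
        rw [hcsdef, Function.update_of_ne e]
        exact hv'2 h
      · intro _
        rcases Nat.eq_zero_or_pos i with h0 | h0
        · have e0 : (0 : Fin (n + 1)) = idx := by
            apply Fin.ext; simp only [Fin.val_zero, hidxdef]; omega
          rw [hcsdef, e0, Function.update_self]
          refine ⟨⟨u, Finset.mem_inter.2 ⟨huZs, hu0 h0⟩⟩, ?_⟩
          have := hcondZs.2
          rw [hprevdef, if_pos h0] at this; exact this
        · have e0 : (0 : Fin (n + 1)) ≠ idx := by
            intro h; have h2 := congrArg Fin.val h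
            simp only [Fin.val_zero, hidxdef] at h2; omega
          rw [hcsdef, Function.update_of_ne e0]
          exact hstart (by omega)
      · intro j hj1 hj2
        have hjlt := j.isLt
        rcases eq_or_ne ((j : ℕ) + 1) i with hj | hj
        · have ejs : j.succ = idx := by
            apply Fin.ext; simp only [Fin.val_succ, hidxdef]; omega
          have ejc : j.castSucc ≠ idx := by
            intro h; have h2 := congrArg Fin.val h
            simp only [Fin.coe_castSucc, hidxdef] at h2; omega
          rw [hcsdef, ejs, Function.update_self, Function.update_of_ne ejc]
          have ecp : c j.castSucc = prev := by
            rw [hprevdef, if_neg (by omega)]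
            congr 1
            apply Fin.ext; simp only [Fin.coe_castSucc]; omega
          rw [ecp]
          exact ⟨⟨u, Finset.mem_inter.2 ⟨huZs, huprev⟩⟩, hcondZs.2⟩
        · have ejs : j.succ ≠ idx := by
            intro h; have h2 := congrArg Fin.val h
            simp only [Fin.val_succ, hidxdef] at h2; omega
          have ejc : j.castSucc ≠ idx := by
            intro h; have h2 := congrArg Fin.val h
            simp only [Fin.coe_castSucc, hidxdef] at h2; omega
          rw [hcsdef, Function.update_of_ne ejs, Function.update_of_ne ejc]
          exact hlink j (by omega) (by omega)
      · intro h
        have el : Fin.last n ≠ idx := by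
          intro he; have h2 := congrArg Fin.val he
          simp only [Fin.val_last, hidxdef] at h2; omega
        rw [hcsdef, Function.update_of_ne el]
        exact hend (by omega)
      · intro j hj
        rcases eq_or_ne j idx with h | h
        · rw [hcsdef, h, Function.update_self]; exact hgZs
        · rw [hcsdef, Function.update_of_ne h]
          apply hpos
          intro hv'
          exact h (Fin.ext (by simp only [hidxdef]; omega))
      · apply LR_split _ _
          (fun Z => if Z ⊆ Zs then (if cnext ⊆ Z ∧ ¬ Z ⊆ prev then q Z else 0) else 0) ?_ hq2 ?_
        · intro Z; by_cases h : Z ⊆ Zs <;> simp [h]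
        · apply LR_tsum_subsets_ne_top _ ?_ Zs ?_
          · intro Z; split
            · split
              · exact ((hqg Z).trans_lt (hg Z).lt_top).ne
              · exact ENNReal.zero_ne_top
            · exact ENNReal.zero_ne_top
          · intro Z hZ
            by_contra h
            rw [if_neg h] at hZ; exact hZ rfl
    · -- replacement case
      have hfin3 : ∑' Z, (if ¬ cnext ⊆ Z ∧ Z ⊆ prev then q Z else 0) ≠ ⊤ := by
        apply LR_tsum_subsets_ne_top _ ?_ prev ?_
        · intro Z; split
          · exact ((hqg Z).trans_lt (hg Z).lt_top).ne
          · exact ENNReal.zero_ne_top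
        · intro Z hZ
          by_contra h
          rw [if_neg (fun hc => h hc.2)] at hZ; exact hZ rfl
      have hq1 : ∑' Z, (if ¬ cnext ⊆ Z ∧ ¬ Z ⊆ prev then q Z else 0) = ⊤ := by
        apply LR_split q _
          (fun Z => (if cnext ⊆ Z then q Z else 0) + (if ¬ cnext ⊆ Z ∧ Z ⊆ prev then q Z else 0))
          ?_ hheavy ?_
        · intro Z
          by_cases h1 : cnext ⊆ Z <;> by_cases h2 : Z ⊆ prev <;> simp [h1, h2]
        · rw [ENNReal.tsum_add]
          exact ENNReal.add_ne_top.2 ⟨h2top, hfin3⟩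
      apply LR_replace g X₀ Y n c idx _ ?_ ?_ ?_ hq1
      · intro Z; split
        · exact hqg Z
        · exact zero_le
      · intro Z hZ
        have hcond : ¬ cnext ⊆ Z ∧ ¬ Z ⊆ prev := by
          by_contra h; rw [if_neg h] at hZ; exact hZ rfl
        rw [if_pos hcond] at hZ
        obtain ⟨huZ, hvZ⟩ := hq Z hZ
        refine ⟨?_, ?_, ?_⟩
        · rcases Nat.eq_zero_or_pos i with h0 | h0
          · have e0 : (0 : Fin (n + 1)) = idx := by
              apply Fin.ext; simp only [Fin.val_zero, hidxdef]; omega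
            rw [e0, Function.update_self]
            refine ⟨⟨u, Finset.mem_inter.2 ⟨huZ, hu0 h0⟩⟩, ?_⟩
            have := hcond.2
            rw [hprevdef, if_pos h0] at this; exact this
          · have e0 : (0 : Fin (n + 1)) ≠ idx := by
              intro h; have h2 := congrArg Fin.val h
              simp only [Fin.val_zero, hidxdef] at h2; omega
            rw [Function.update_of_ne e0]
            exact hstart (by omega)
        · intro j
          have hjlt := j.isLt
          rcases eq_or_ne ((j : ℕ) + 1) i with hj | hj
          · have ejs : j.succ = idx := by
              apply Fin.ext; simp only [Fin.val_succ, hidxdef]; omega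
            have ejc : j.castSucc ≠ idx := by
              intro h; have h2 := congrArg Fin.val h
              simp only [Fin.coe_castSucc, hidxdef] at h2; omega
            rw [ejs, Function.update_self, Function.update_of_ne ejc]
            have ecp : c j.castSucc = prev := by
              rw [hprevdef, if_neg (by omega)]
              congr 1
              apply Fin.ext; simp only [Fin.coe_castSucc]; omega
            rw [ecp]
            exact ⟨⟨u, Finset.mem_inter.2 ⟨huZ, huprev⟩⟩, hcond.2⟩
          · rcases eq_or_ne ((j : ℕ)) i with hj2 | hj2
            · have ejc : j.castSucc = idx := by
                apply Fin.ext; simp only [Fin.coe_castSucc, hidxdef]; omega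
              have ejs : j.succ ≠ idx := by
                intro h; have h2 := congrArg Fin.val h
                simp only [Fin.val_succ, hidxdef] at h2; omega
              rw [ejc, Function.update_self, Function.update_of_ne ejs]
              have ecn : c j.succ = cnext := by
                rw [hcnextdef]
                congr 1
                apply Fin.ext; simp only [Fin.val_succ]; omega
              rw [ecn]
              exact ⟨⟨v, Finset.mem_inter.2 ⟨hvnext, hvZ⟩⟩, hcond.1⟩
            · have ejs : j.succ ≠ idx := by
                intro h; have h2 := congrArg Fin.val h
                simp only [Fin.val_succ, hidxdef] at h2; omega
              have ejc : j.castSucc ≠ idx := by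
                intro h; have h2 := congrArg Fin.val h
                simp only [Fin.coe_castSucc, hidxdef] at h2; omega
              rw [Function.update_of_ne ejs, Function.update_of_ne ejc]
              exact hlink j hj hj2
        · have el : Fin.last n ≠ idx := by
            intro he; have h2 := congrArg Fin.val he
            simp only [Fin.val_last, hidxdef] at h2; omega
          rw [Function.update_of_ne el]
          exact hend (by omega)
      · intro j hj
        apply hpos
        intro hv'
        exact hj (Fin.ext (by simp only [hidxdef]; omega))
end


lemma LR_pair_bound {γ : Type*} (ΦN : γ → ℝ) (hΦN : ∀ Z, 0 ≤ ΦN Z)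
    (b : ℝ) (p : γ → Prop) [DecidablePred p]
    (hb : (∑' Z, if p Z then ΦN Z else 0) ≤ b)
    (htop : (∑' Z, if p Z then ENNReal.ofReal (ΦN Z) else 0) ≠ ⊤) :
    (∑' Z, if p Z then ENNReal.ofReal (ΦN Z) else 0) ≤ ENNReal.ofReal b := by
  have hcong : ∀ Z, (if p Z then ENNReal.ofReal (ΦN Z) else 0)
      = ENNReal.ofReal (if p Z then ΦN Z else 0) := by
    intro Z; split <;> simp
  rw [tsum_congr hcong] at htop ⊢
  have hnn : ∀ Z, 0 ≤ (if p Z then ΦN Z else 0) := by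
    intro Z; split
    · exact hΦN Z
    · exact le_refl 0
  have hsum : Summable (fun Z => if p Z then ΦN Z else 0) := by
    have h2 := ENNReal.summable_toReal htop
    have h3 : (fun Z => (ENNReal.ofReal (if p Z then ΦN Z else 0)).toReal)
        = fun Z => if p Z then ΦN Z else 0 := by
      funext Z; exact ENNReal.toReal_ofReal (hnn Z)
    rwa [h3] at h2
  rw [← ENNReal.ofReal_tsum_of_nonneg hnn hsum]
  exact ENNReal.ofReal_le_ofReal hb

/-- The path of points `x, z 0, ..., z (m-1), y`. -/
def LRW {Γ : Type*} (x y : Γ) {m : ℕ} (z : Fin m → Γ) : Fin (m + 2) → Γ :=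
  Fin.cons x (Fin.snoc z y)

lemma LRW_zero {Γ : Type*} (x y : Γ) {m : ℕ} (z : Fin m → Γ) : LRW x y z 0 = x := rfl

lemma LR_path {Γ : Type*} (oF : Γ → Γ → ℝ≥0∞) (oC : ℝ≥0∞)
    (hconv : ∀ x y : Γ, (∑' z : Γ, oF x z * oF z y) ≤ oC * oF x y) :
    ∀ (m : ℕ) (x y : Γ),
      (∑' z : Fin m → Γ, ∏ i : Fin (m + 1),
        oF (LRW x y z i.castSucc) (LRW x y z i.succ))
        ≤ oC ^ m * oF x y := by
  intro m
  induction m with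
  | zero =>
    intro x y
    have h1 : ∀ z : Fin 0 → Γ, (∏ i : Fin 1,
        oF (LRW x y z i.castSucc) (LRW x y z i.succ))
        = oF x y := by
      intro z
      have e2 : LRW x y z (Fin.succ 0) = y := by
        unfold LRW
        rw [Fin.cons_succ]
        exact Fin.snoc_last _ _
      have e1 : LRW x y z (Fin.castSucc 0) = x := rfl
      rw [Fin.prod_univ_one, e1, e2]
    have h2 : (∑' _z : Fin 0 → Γ, oF x y) = oF x y :=
      tsum_eq_single (fun i : Fin 0 => i.elim0) (fun b hb => absurd (Subsingleton.elim _ _) hb)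
    rw [tsum_congr h1, h2, pow_zero, one_mul]
  | succ m ih =>
    intro x y
    rw [← Equiv.tsum_eq (Fin.consEquiv (fun _ : Fin (m + 1) => Γ))
      (fun z => ∏ i : Fin (m + 2),
        oF (LRW x y z i.castSucc) (LRW x y z i.succ))]
    have hsplit : ∀ p : Γ × (Fin m → Γ),
        (∏ i : Fin (m + 2),
          oF (LRW x y ((Fin.consEquiv (fun _ : Fin (m + 1) => Γ)) p) i.castSucc)
             (LRW x y ((Fin.consEquiv (fun _ : Fin (m + 1) => Γ)) p) i.succ))
        = oF x p.1 * ∏ i : Fin (m + 1),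
            oF (LRW p.1 y p.2 i.castSucc) (LRW p.1 y p.2 i.succ) := by
      intro p
      obtain ⟨z₀, z'⟩ := p
      have he : (Fin.consEquiv (fun _ : Fin (m + 1) => Γ)) (z₀, z') = Fin.cons z₀ z' := rfl
      have hcs : LRW x y (Fin.cons z₀ z' : Fin (m+1) → Γ)
          = Fin.cons x (Fin.cons z₀ (Fin.snoc z' y)) := by
        unfold LRW
        rw [← Fin.cons_snoc_eq_snoc_cons]
      simp only [he, hcs]
      rw [Fin.prod_univ_succ]
      have e1 : (Fin.cons x (Fin.cons z₀ (Fin.snoc z' y)) : Fin (m + 3) → Γ)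
          (Fin.castSucc 0) = x := rfl
      have e2 : (Fin.cons x (Fin.cons z₀ (Fin.snoc z' y)) : Fin (m + 3) → Γ)
          (Fin.succ 0) = z₀ := by
        rw [Fin.cons_succ, Fin.cons_zero]
      rw [e1, e2]
      congr 1
    rw [tsum_congr hsplit]
    rw [show (∑' p : Γ × (Fin m → Γ), oF x p.1 * ∏ i : Fin (m + 1),
          oF (LRW p.1 y p.2 i.castSucc) (LRW p.1 y p.2 i.succ))
        = ∑' (z₀ : Γ) (z' : Fin m → Γ), oF x z₀ * ∏ i : Fin (m + 1),
          oF (LRW z₀ y z' i.castSucc) (LRW z₀ y z' i.succ) from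
      ENNReal.tsum_prod (f := fun (z₀ : Γ) (z' : Fin m → Γ) => oF x z₀ * ∏ i : Fin (m + 1),
          oF (LRW z₀ y z' i.castSucc) (LRW z₀ y z' i.succ))]
    calc (∑' (z₀ : Γ) (z' : Fin m → Γ), oF x z₀ * ∏ i : Fin (m + 1),
          oF (LRW z₀ y z' i.castSucc) (LRW z₀ y z' i.succ))
        = ∑' z₀ : Γ, oF x z₀ * ∑' z' : Fin m → Γ, ∏ i : Fin (m + 1),
            oF (LRW z₀ y z' i.castSucc) (LRW z₀ y z' i.succ) := by
          exact tsum_congr fun z₀ => ENNReal.tsum_mul_left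
      _ ≤ ∑' z₀ : Γ, oF x z₀ * (oC ^ m * oF z₀ y) := by
          apply ENNReal.tsum_le_tsum
          intro z₀
          exact mul_le_mul_right (ih z₀ y) _
      _ = oC ^ m * ∑' z₀ : Γ, oF x z₀ * oF z₀ y := by
          rw [← ENNReal.tsum_mul_left]
          exact tsum_congr fun z₀ => by ring
      _ ≤ oC ^ m * (oC * oF x y) := mul_le_mul_right (hconv x y) _
      _ = oC ^ (m + 1) * oF x y := by ring


/-- The combinatorial core of the Lieb-Robinson bound. -/
theorem stmt_12 {Γ : Type*} [MetricSpace Γ] [Countable Γ] [DecidableEq Γ]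
    (F : ℝ → ℝ) (hFpos : ∀ r : ℝ, 0 ≤ r → 0 < F r)
    (hFmono : ∀ r s : ℝ, 0 ≤ r → r ≤ s → F s ≤ F r)
    (normF C : ℝ)
    (hFsummable : ∀ x : Γ, Summable fun y : Γ => F (dist x y))
    (hnormF : ∀ x : Γ, ∑' y : Γ, F (dist x y) ≤ normF)
    (hC : ∀ x y : Γ, ∑' z : Γ, F (dist x z) * F (dist z y) ≤ C * F (dist x y))
    (hCpos : 0 ≤ C)
    (ΦN : Finset Γ → ℝ) (hΦN : ∀ Z, 0 ≤ ΦN Z)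
    (Φnorm : ℝ) (hΦnorm : 0 ≤ Φnorm)
    (hΦ : ∀ x y : Γ,
      ∑' Z : Finset Γ, (if x ∈ Z ∧ y ∈ Z then ΦN Z else 0) ≤ Φnorm * F (dist x y))
    (X₀ Y : Finset Γ) (hXY : Disjoint X₀ Y) (n : ℕ) :
    (∑' c : Fin (n + 1) → Finset Γ,
        if ((c 0 ∩ X₀).Nonempty ∧ ¬ c 0 ⊆ X₀)
            ∧ (∀ i : Fin n, (c i.succ ∩ c i.castSucc).Nonempty ∧ ¬ c i.succ ⊆ c i.castSucc)
            ∧ (c (Fin.last n) ∩ Y).Nonempty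
          then ∏ i : Fin (n + 1), ΦN (c i) else 0)
      ≤ Φnorm ^ (n + 1) * C ^ n * ∑ y ∈ Y, ∑ x ∈ X₀, F (dist x y) := by
  have hFnn : ∀ r : ℝ, 0 ≤ r → 0 ≤ F r := fun r hr => (hFpos r hr).le
  set g : Finset Γ → ℝ≥0∞ := fun Z => ENNReal.ofReal (ΦN Z) with hgdef
  have hgtop : ∀ Z, g Z ≠ ⊤ := fun Z => ENNReal.ofReal_ne_top
  set A : ℝ≥0∞ := ∑' c : Fin (n + 1) → Finset Γ,
    if LRch X₀ Y n c then ∏ j, g (c j) else 0 with hAdef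
  set f : (Fin (n + 1) → Finset Γ) → ℝ := fun c =>
    if LRch X₀ Y n c then ∏ i : Fin (n + 1), ΦN (c i) else 0 with hfdef
  have hfnn : ∀ c, 0 ≤ f c := by
    intro c
    rw [hfdef]
    dsimp only
    split
    · exact Finset.prod_nonneg fun i _ => hΦN _
    · exact le_refl 0
  have hAf : A = ∑' c, ENNReal.ofReal (f c) := by
    rw [hAdef]
    refine tsum_congr fun c => ?_
    rw [hfdef]
    dsimp only
    rw [hgdef]
    dsimp only
    split
    · exact (ENNReal.ofReal_prod_of_nonneg fun i _ => hΦN _).symm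
    · simp
  have hRHSnn : 0 ≤ Φnorm ^ (n + 1) * C ^ n * ∑ y ∈ Y, ∑ x ∈ X₀, F (dist x y) := by
    refine mul_nonneg (mul_nonneg (pow_nonneg hΦnorm _) (pow_nonneg hCpos _)) ?_
    exact Finset.sum_nonneg fun y _ => Finset.sum_nonneg fun x _ => hFnn _ dist_nonneg
  have hgoal : (∑' c : Fin (n + 1) → Finset Γ,
      if ((c 0 ∩ X₀).Nonempty ∧ ¬ c 0 ⊆ X₀)
          ∧ (∀ i : Fin n, (c i.succ ∩ c i.castSucc).Nonempty ∧ ¬ c i.succ ⊆ c i.castSucc)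
          ∧ (c (Fin.last n) ∩ Y).Nonempty
        then ∏ i : Fin (n + 1), ΦN (c i) else 0) = ∑' c, f c := by
    refine tsum_congr fun c => ?_
    rw [hfdef]
    exact if_congr Iff.rfl rfl rfl
  rw [hgoal]
  by_cases hA : A = ⊤
  · have hns : ¬ Summable f := by
      intro hs
      have h1 : ENNReal.ofReal (∑' c, f c) = A := by
        rw [hAf]; exact ENNReal.ofReal_tsum_of_nonneg hfnn hs
      rw [hA] at h1
      exact ENNReal.ofReal_ne_top h1
    rw [tsum_eq_zero_of_not_summable hns]
    exact hRHSnn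
  · -- finite case : prove the ℝ≥0∞ bound
    have hPb : ∀ a b : Γ,
        (∑' Z : Finset Γ, if a ∈ Z ∧ b ∈ Z then g Z else 0) ≠ ⊤ →
        (∑' Z : Finset Γ, if a ∈ Z ∧ b ∈ Z then g Z else 0)
          ≤ ENNReal.ofReal (Φnorm * F (dist a b)) := by
      intro a b h
      exact LR_pair_bound ΦN hΦN _ _ (hΦ a b) h
    have hconv : ∀ a b : Γ,
        (∑' t : Γ, ENNReal.ofReal (F (dist a t)) * ENNReal.ofReal (F (dist t b)))
          ≤ ENNReal.ofReal C * ENNReal.ofReal (F (dist a b)) := by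
      intro a b
      have h1 : ∀ t : Γ, ENNReal.ofReal (F (dist a t)) * ENNReal.ofReal (F (dist t b))
          = ENNReal.ofReal (F (dist a t) * F (dist t b)) :=
        fun t => (ENNReal.ofReal_mul (hFnn _ dist_nonneg)).symm
      rw [tsum_congr h1]
      have hsummul : Summable fun t : Γ => F (dist a t) * F (dist t b) := by
        refine Summable.of_nonneg_of_le
          (fun t => mul_nonneg (hFnn _ dist_nonneg) (hFnn _ dist_nonneg))
          (fun t => ?_) ((hFsummable a).mul_right (F 0))
        exact mul_le_mul_of_nonneg_left (hFmono 0 _ le_rfl dist_nonneg) (hFnn _ dist_nonneg)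
      rw [← ENNReal.ofReal_tsum_of_nonneg
        (fun t => mul_nonneg (hFnn _ dist_nonneg) (hFnn _ dist_nonneg)) hsummul,
        ← ENNReal.ofReal_mul hCpos]
      exact ENNReal.ofReal_le_ofReal (hC a b)
    set ct : (Fin (n + 1) → Finset Γ) → Γ → Γ → (Fin n → Γ) → Prop := fun c x y z =>
      ∀ i : Fin (n + 1), LRW x y z i.castSucc ∈ c i ∧ LRW x y z i.succ ∈ c i with hctdef
    set N : Γ → Γ → (Fin n → Γ) → ℝ≥0∞ := fun x y z =>
      ∑' c : Fin (n + 1) → Finset Γ, if LRch X₀ Y n c ∧ ct c x y z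
        then ∏ j, g (c j) else 0 with hNdef
    have hK : ∀ x y : Γ, x ∈ X₀ → y ∈ Y → ∀ z : Fin n → Γ,
        N x y z ≤ ∏ i : Fin (n + 1),
          ENNReal.ofReal (Φnorm * F (dist (LRW x y z i.castSucc) (LRW x y z i.succ))) := by
      intro x y hx hy z
      by_cases hN0 : N x y z = 0
      · rw [hN0]; exact zero_le
      · rw [hNdef] at hN0
        dsimp only at hN0
        rw [ENNReal.tsum_eq_zero] at hN0
        push_neg at hN0
        obtain ⟨c₀, hc₀⟩ := hN0
        have hcc : LRch X₀ Y n c₀ ∧ ct c₀ x y z := by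
          by_contra h; rw [if_neg h] at hc₀; exact hc₀ rfl
        rw [if_pos hcc] at hc₀
        have hposall : ∀ j : Fin (n + 1), g (c₀ j) ≠ 0 := by
          intro j
          exact Finset.prod_ne_zero_iff.1 hc₀ j (Finset.mem_univ j)
        have hPfin : ∀ i : Fin (n + 1),
            (∑' Z : Finset Γ, if LRW x y z i.castSucc ∈ Z ∧ LRW x y z i.succ ∈ Z
              then g Z else 0) ≠ ⊤ := by
          intro i htop
          apply hA
          rw [hAdef]
          have hile : i.val ≤ n := by omega
          refine LR_core g hgtop X₀ Y n (n - i.val) i.val hile rfl c₀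
            (LRW x y z i.castSucc) (LRW x y z i.succ)
            (fun Z => if LRW x y z i.castSucc ∈ Z ∧ LRW x y z i.succ ∈ Z then g Z else 0)
            ?_ ?_ ?_ ?_ ?_ ?_ ?_ ?_ ?_ ?_ htop
          · intro Z; split
            · exact le_rfl
            · exact zero_le
          · intro Z hZ
            by_contra h
            rw [if_neg h] at hZ; exact hZ rfl
          · intro h0
            have e : i.castSucc = (0 : Fin (n + 2)) := by
              apply Fin.ext; simp only [Fin.coe_castSucc, Fin.val_zero]; omega
            rw [e]
            exact hx
          · intro hpos0
            have hlt : i.val - 1 < n + 1 := by omega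
            have h2 := (hcc.2 ⟨i.val - 1, hlt⟩).2
            have e : Fin.succ (⟨i.val - 1, hlt⟩ : Fin (n + 1)) = i.castSucc := by
              apply Fin.ext; simp only [Fin.val_succ, Fin.coe_castSucc]; omega
            rw [e] at h2
            exact h2
          · intro hin
            have e : i.succ = Fin.succ (Fin.last n) := by
              apply Fin.ext; simp only [Fin.val_succ, Fin.val_last]; omega
            have e2 : LRW x y z (Fin.succ (Fin.last n)) = y := by
              unfold LRW
              rw [Fin.cons_succ]
              exact Fin.snoc_last _ _
            rw [e, e2]
            exact hy
          · intro hlt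
            have hlt2 : i.val + 1 < n + 1 := by omega
            have h2 := (hcc.2 ⟨i.val + 1, hlt2⟩).1
            have e : Fin.castSucc (⟨i.val + 1, hlt2⟩ : Fin (n + 1)) = i.succ := by
              apply Fin.ext; simp only [Fin.val_succ, Fin.coe_castSucc]
            rw [e] at h2
            exact h2
          · exact fun _ => hcc.1.1
          · exact fun j _ _ => hcc.1.2.1 j
          · exact fun _ => hcc.1.2.2
          · exact fun j _ => hposall j
        calc N x y z ≤ ∏ i : Fin (n + 1),
            (∑' Z : Finset Γ, if LRW x y z i.castSucc ∈ Z ∧ LRW x y z i.succ ∈ Z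
              then g Z else 0) := by
              rw [hNdef]
              dsimp only
              rw [← LR_tsum_pi_prod (n + 1)
                (fun i Z => if LRW x y z i.castSucc ∈ Z ∧ LRW x y z i.succ ∈ Z then g Z else 0)]
              refine ENNReal.tsum_le_tsum fun c => ?_
              by_cases hcd : LRch X₀ Y n c ∧ ct c x y z
              · rw [if_pos hcd]
                refine le_of_eq (Finset.prod_congr rfl fun i _ => ?_)
                rw [if_pos (hcd.2 i)]
              · rw [if_neg hcd]; exact zero_le
          _ ≤ ∏ i : Fin (n + 1),
              ENNReal.ofReal (Φnorm * F (dist (LRW x y z i.castSucc) (LRW x y z i.succ))) :=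
              Finset.prod_le_prod' fun i _ => hPb _ _ (hPfin i)
    set H : (Fin (n + 1) → Finset Γ) → Γ → Γ → (Fin n → Γ) → ℝ≥0∞ := fun c x y z =>
      if (x ∈ X₀ ∧ y ∈ Y) ∧ (LRch X₀ Y n c ∧ ct c x y z) then ∏ j, g (c j) else 0 with hHdef
    have hpoint : ∀ c : Fin (n + 1) → Finset Γ,
        (if LRch X₀ Y n c then ∏ j, g (c j) else 0)
          ≤ ∑' x : Γ, ∑' y : Γ, ∑' z : Fin n → Γ, H c x y z := by
      intro c
      by_cases hLR : LRch X₀ Y n c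
      · rw [if_pos hLR]
        obtain ⟨x₀, hx₀⟩ := hLR.1.1
        rw [Finset.mem_inter] at hx₀
        obtain ⟨y₀, hy₀⟩ := hLR.2.2
        rw [Finset.mem_inter] at hy₀
        set z₀ : Fin n → Γ := fun j => ((hLR.2.1 j).1).choose with hz₀def
        have hz : ∀ j : Fin n, z₀ j ∈ c j.succ ∧ z₀ j ∈ c j.castSucc := by
          intro j
          have h2 := ((hLR.2.1 j).1).choose_spec
          rw [Finset.mem_inter] at h2
          exact h2
        have hct0 : ct c x₀ y₀ z₀ := by
          rw [hctdef]
          dsimp only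
          intro i
          constructor
          · refine Fin.cases ?_ ?_ i
            · exact hx₀.1
            · intro j
              have e : LRW x₀ y₀ z₀ (Fin.castSucc (Fin.succ j)) = z₀ j := by
                unfold LRW
                rw [← Fin.succ_castSucc, Fin.cons_succ, Fin.snoc_castSucc]
              rw [e]
              exact (hz j).1
          · refine Fin.lastCases ?_ ?_ i
            · have e : LRW x₀ y₀ z₀ (Fin.succ (Fin.last n)) = y₀ := by
                unfold LRW
                rw [Fin.cons_succ]
                exact Fin.snoc_last _ _
              rw [e]
              exact hy₀.1
            · intro j
              have e : LRW x₀ y₀ z₀ (Fin.succ (Fin.castSucc j)) = z₀ j := by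
                unfold LRW
                rw [Fin.cons_succ, Fin.snoc_castSucc]
              rw [e]
              exact (hz j).2
        have hterm : (∏ j, g (c j)) = H c x₀ y₀ z₀ := by
          rw [hHdef]
          dsimp only
          rw [if_pos ⟨⟨hx₀.2, hy₀.2⟩, hLR, hct0⟩]
        calc (∏ j, g (c j)) = H c x₀ y₀ z₀ := hterm
          _ ≤ ∑' z, H c x₀ y₀ z := ENNReal.le_tsum z₀
          _ ≤ ∑' y, ∑' z, H c x₀ y z := ENNReal.le_tsum y₀
          _ ≤ ∑' x, ∑' y, ∑' z, H c x y z := ENNReal.le_tsum x₀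
      · rw [if_neg hLR]; exact zero_le
    have hswap : (∑' c : Fin (n + 1) → Finset Γ, ∑' x : Γ, ∑' y : Γ, ∑' z : Fin n → Γ, H c x y z)
        = ∑' x : Γ, ∑' y : Γ, ∑' z : Fin n → Γ, ∑' c : Fin (n + 1) → Finset Γ, H c x y z := by
      rw [ENNReal.tsum_comm (f := fun c x => ∑' y : Γ, ∑' z : Fin n → Γ, H c x y z)]
      refine tsum_congr fun x => ?_
      rw [ENNReal.tsum_comm (f := fun c y => ∑' z : Fin n → Γ, H c x y z)]
      refine tsum_congr fun y => ?_
      exact ENNReal.tsum_comm (f := fun c z => H c x y z)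
    have hinner : ∀ x y : Γ,
        (∑' z : Fin n → Γ, ∑' c : Fin (n + 1) → Finset Γ, H c x y z)
          = if x ∈ X₀ ∧ y ∈ Y then ∑' z : Fin n → Γ, N x y z else 0 := by
      intro x y
      by_cases hxy : x ∈ X₀ ∧ y ∈ Y
      · rw [if_pos hxy]
        refine tsum_congr fun z => ?_
        rw [hNdef]
        dsimp only
        refine tsum_congr fun c => ?_
        rw [hHdef]
        dsimp only
        exact if_congr (and_iff_right hxy) rfl rfl
      · rw [if_neg hxy]
        have hz : ∀ z : Fin n → Γ, (∑' c : Fin (n + 1) → Finset Γ, H c x y z) = 0 := by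
          intro z
          rw [ENNReal.tsum_eq_zero]
          intro c
          rw [hHdef]
          dsimp only
          exact if_neg fun h => hxy h.1
        rw [tsum_congr hz, tsum_zero]
    have hzbound : ∀ x y : Γ, x ∈ X₀ → y ∈ Y →
        (∑' z : Fin n → Γ, N x y z)
          ≤ ENNReal.ofReal Φnorm ^ (n + 1) *
            (ENNReal.ofReal C ^ n * ENNReal.ofReal (F (dist x y))) := by
      intro x y hx hy
      calc (∑' z : Fin n → Γ, N x y z)
          ≤ ∑' z : Fin n → Γ, ∏ i : Fin (n + 1),
            ENNReal.ofReal (Φnorm * F (dist (LRW x y z i.castSucc) (LRW x y z i.succ))) :=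
            ENNReal.tsum_le_tsum fun z => hK x y hx hy z
        _ = ∑' z : Fin n → Γ, ENNReal.ofReal Φnorm ^ (n + 1) * ∏ i : Fin (n + 1),
            ENNReal.ofReal (F (dist (LRW x y z i.castSucc) (LRW x y z i.succ))) := by
            refine tsum_congr fun z => ?_
            calc (∏ i : Fin (n + 1),
                ENNReal.ofReal (Φnorm * F (dist (LRW x y z i.castSucc) (LRW x y z i.succ))))
                = ∏ i : Fin (n + 1), ENNReal.ofReal Φnorm *
                  ENNReal.ofReal (F (dist (LRW x y z i.castSucc) (LRW x y z i.succ))) := by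
                  refine Finset.prod_congr rfl fun i _ => ?_
                  rw [ENNReal.ofReal_mul hΦnorm]
              _ = ENNReal.ofReal Φnorm ^ (n + 1) * ∏ i : Fin (n + 1),
                  ENNReal.ofReal (F (dist (LRW x y z i.castSucc) (LRW x y z i.succ))) := by
                  rw [Finset.prod_mul_distrib, Finset.prod_const, Finset.card_univ,
                    Fintype.card_fin]
        _ = ENNReal.ofReal Φnorm ^ (n + 1) * ∑' z : Fin n → Γ, ∏ i : Fin (n + 1),
            ENNReal.ofReal (F (dist (LRW x y z i.castSucc) (LRW x y z i.succ))) :=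
            ENNReal.tsum_mul_left
        _ ≤ ENNReal.ofReal Φnorm ^ (n + 1) *
            (ENNReal.ofReal C ^ n * ENNReal.ofReal (F (dist x y))) :=
            mul_le_mul_right
              (LR_path (fun a b => ENNReal.ofReal (F (dist a b))) (ENNReal.ofReal C) hconv n x y) _
    have hbound : A ≤ ENNReal.ofReal
        (Φnorm ^ (n + 1) * C ^ n * ∑ y ∈ Y, ∑ x ∈ X₀, F (dist x y)) := by
      calc A ≤ ∑' c : Fin (n + 1) → Finset Γ, ∑' x : Γ, ∑' y : Γ, ∑' z : Fin n → Γ, H c x y z := by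
            rw [hAdef]; exact ENNReal.tsum_le_tsum hpoint
        _ = ∑' x : Γ, ∑' y : Γ, ∑' z : Fin n → Γ, ∑' c : Fin (n + 1) → Finset Γ, H c x y z := hswap
        _ = ∑' x : Γ, ∑' y : Γ, (if x ∈ X₀ ∧ y ∈ Y then ∑' z : Fin n → Γ, N x y z else 0) :=
            tsum_congr fun x => tsum_congr fun y => hinner x y
        _ ≤ ∑' x : Γ, ∑' y : Γ, (if x ∈ X₀ ∧ y ∈ Y then
            ENNReal.ofReal Φnorm ^ (n + 1) *
              (ENNReal.ofReal C ^ n * ENNReal.ofReal (F (dist x y))) else 0) := by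
            refine ENNReal.tsum_le_tsum fun x => ENNReal.tsum_le_tsum fun y => ?_
            by_cases hxy : x ∈ X₀ ∧ y ∈ Y
            · rw [if_pos hxy, if_pos hxy]; exact hzbound x y hxy.1 hxy.2
            · rw [if_neg hxy, if_neg hxy]
        _ = ∑ x ∈ X₀, ∑ y ∈ Y, ENNReal.ofReal Φnorm ^ (n + 1) *
            (ENNReal.ofReal C ^ n * ENNReal.ofReal (F (dist x y))) := by
            have h1 : ∀ x : Γ, (∑' y : Γ, if x ∈ X₀ ∧ y ∈ Y then
                ENNReal.ofReal Φnorm ^ (n + 1) *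
                  (ENNReal.ofReal C ^ n * ENNReal.ofReal (F (dist x y))) else 0)
                = if x ∈ X₀ then ∑ y ∈ Y, ENNReal.ofReal Φnorm ^ (n + 1) *
                  (ENNReal.ofReal C ^ n * ENNReal.ofReal (F (dist x y))) else 0 := by
              intro x
              by_cases hx : x ∈ X₀
              · rw [if_pos hx]
                rw [tsum_eq_sum (s := Y) (fun y hy => if_neg fun h => hy h.2)]
                exact Finset.sum_congr rfl fun y hy => if_pos ⟨hx, hy⟩
              · rw [if_neg hx]
                have hzz : ∀ y : Γ, (if x ∈ X₀ ∧ y ∈ Y then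
                    ENNReal.ofReal Φnorm ^ (n + 1) *
                      (ENNReal.ofReal C ^ n * ENNReal.ofReal (F (dist x y))) else 0) = 0 :=
                  fun y => if_neg fun h => hx h.1
                rw [tsum_congr hzz, tsum_zero]
            rw [tsum_congr h1, tsum_eq_sum (s := X₀) (fun x hx => if_neg hx)]
            exact Finset.sum_congr rfl fun x hx => if_pos hx
        _ = ENNReal.ofReal (Φnorm ^ (n + 1) * C ^ n * ∑ y ∈ Y, ∑ x ∈ X₀, F (dist x y)) := by
            rw [ENNReal.ofReal_mul (mul_nonneg (pow_nonneg hΦnorm _) (pow_nonneg hCpos _)),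
              ENNReal.ofReal_mul (pow_nonneg hΦnorm _),
              ENNReal.ofReal_sum_of_nonneg
                (fun y _ => Finset.sum_nonneg fun x _ => hFnn _ dist_nonneg),
              ENNReal.ofReal_pow hΦnorm, ENNReal.ofReal_pow hCpos]
            have h2 : ∀ y ∈ Y, ENNReal.ofReal (∑ x ∈ X₀, F (dist x y))
                = ∑ x ∈ X₀, ENNReal.ofReal (F (dist x y)) :=
              fun y _ => ENNReal.ofReal_sum_of_nonneg fun x _ => hFnn _ dist_nonneg
            rw [Finset.sum_congr rfl h2]
            rw [Finset.sum_comm]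
            rw [Finset.mul_sum]
            refine Finset.sum_congr rfl fun x _ => ?_
            rw [Finset.mul_sum]
            refine Finset.sum_congr rfl fun y _ => ?_
            rw [mul_assoc]
    have hsum : Summable f := by
      have h2 : (∑' c, ENNReal.ofReal (f c)) ≠ ⊤ := by rw [← hAf]; exact hA
      have h3 := ENNReal.summable_toReal h2
      have h4 : (fun c => (ENNReal.ofReal (f c)).toReal) = f :=
        funext fun c => ENNReal.toReal_ofReal (hfnn c)
      rwa [h4] at h3
    have htsum : ∑' c, f c = A.toReal := by
      rw [hAf, ENNReal.tsum_toReal_eq fun c => ENNReal.ofReal_ne_top]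
      exact tsum_congr fun c => (ENNReal.toReal_ofReal (hfnn c)).symm
    rw [htsum]
    have h5 := ENNReal.toReal_mono ENNReal.ofReal_ne_top hbound
    rwa [ENNReal.toReal_ofReal hRHSnn] at h5
end
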